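/- arXiv:1610.07874 — 7 statements merged into one kernel-verified Lean document; each statement's English description precedes it below -/
import Mathlib

section
/- Suppose X is an irreducible lazy Markov chain whose associated graph is a tree T. Then there is a universal constant c>0 such that t_mix(X) ≥ c · max_{(S_1,…,S_l)∈𝒮_1(X)} Σ_{i=1}^{l} 1/Φ(S_i). -/
open Finset

noncomputable section

/-- A finite Markov chain together with its (positive) stationary distribution. -/
structure MarkovChain (V : Type) [Fintype V] [DecidableEq V] where
  P : V → V → ℝ
  P_nonneg : ∀ u v, 0 ≤ P u v
  P_rowsum : ∀ u, ∑ v, P u v = 1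
  pi : V → ℝ
  pi_pos : ∀ v, 0 < pi v
  pi_sum : ∑ v, pi v = 1
  pi_stat : ∀ v, ∑ u, pi u * P u v = pi v

/-- A set of vertices `A` is connected (in `G`) if any two of its vertices are joined
by a walk all of whose vertices lie in `A` (vacuously true for `∅`). -/
def ConnIn {V : Type} (G : SimpleGraph V) (A : Set V) : Prop :=
  ∀ u ∈ A, ∀ v ∈ A, ∃ p : G.Walk u v, ∀ x ∈ p.support, x ∈ A

/-- Every vertex of `G` has degree at most `Δ`. -/
def DegLE {V : Type} (G : SimpleGraph V) (Δ : ℕ) : Prop :=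
  ∀ v, {u | G.Adj v u}.ncard ≤ Δ

/-- `𝒞` is a correspondence between `G` and `H` of stretch at most `r`. -/
def CorrespondenceStretchLE {V W : Type} (G : SimpleGraph V) (H : SimpleGraph W)
    (r : ℝ) (𝒞 : Set (V × W)) : Prop :=
  (∀ v, ∃ w, (v, w) ∈ 𝒞) ∧ (∀ w, ∃ v, (v, w) ∈ 𝒞) ∧
    ∀ p ∈ 𝒞, ∀ q ∈ 𝒞,
      (max (G.dist p.1 q.1) (H.dist p.2 q.2) : ℝ) + 1 ≤
        r * ((min (G.dist p.1 q.1) (H.dist p.2 q.2) : ℝ) + 1)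

/-- `G` and `H` are `r`-roughly isometric. -/
def RoughIsom {V W : Type} (G : SimpleGraph V) (H : SimpleGraph W) (r : ℝ) : Prop :=
  ∃ 𝒞 : Set (V × W), CorrespondenceStretchLE G H r 𝒞

namespace MarkovChain

variable {V : Type} [Fintype V] [DecidableEq V] (M : MarkovChain V)

/-- `n`-step transition probabilities. -/
def stepDist : ℕ → V → V → ℝ
  | 0, u, v => if u = v then 1 else 0
  | n + 1, u, v => ∑ w, stepDist n u w * M.P w v

def Irreducible : Prop := ∀ u v, ∃ n, 0 < M.stepDist n u v

def Lazy : Prop := ∀ v, M.P v v = 1 / 2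

def Reversible : Prop := ∀ u v, M.pi u * M.P u v = M.pi v * M.P v u

/-- The graph associated to the chain: `u ∼ v` iff `u ≠ v` and `p uv > 0` or `p vu > 0`. -/
def graph : SimpleGraph V where
  Adj u v := u ≠ v ∧ (0 < M.P u v ∨ 0 < M.P v u)
  symm := ⟨fun u v h => ⟨h.1.symm, h.2.symm⟩⟩
  loopless := ⟨fun v h => h.1 rfl⟩

/-- The chain is `ε`-uniform. -/
def Uniform (ε : ℝ) : Prop :=
  ∀ u v x y, M.graph.Adj u v → M.graph.Adj x y →
    ε * (M.pi x * M.P x y) ≤ M.pi u * M.P u v ∧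
      M.pi u * M.P u v ≤ (M.pi x * M.P x y) / ε

/-- `Q A B = P_π(X₀ ∈ A, X₁ ∈ B)`. -/
def Q (A B : Finset V) : ℝ := ∑ u ∈ A, ∑ v ∈ B, M.pi u * M.P u v

/-- `π(A)`. -/
def piSet (A : Finset V) : ℝ := ∑ v ∈ A, M.pi v

/-- `Φ(A) = Q(A,Aᶜ)/(π(A)π(Aᶜ))`. -/
def Phi (A : Finset V) : ℝ := M.Q A Aᶜ / (M.piSet A * M.piSet Aᶜ)

/-- A subset of the state space is connected if it induces a connected subgraph. -/
def Conn (A : Finset V) : Prop := ConnIn M.graph (A : Set V)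

/-- A `θ`-bottleneck sequence `S 1 ⊆ ⋯ ⊆ S l`. -/
def IsBottleneckSeq (θ : ℝ) (l : ℕ) (S : ℕ → Finset V) : Prop :=
  1 ≤ l ∧ (S 1).Nonempty ∧ S l ≠ Finset.univ ∧
    (∀ j, 1 ≤ j → j < l → S j ⊆ S (j + 1)) ∧
    (∀ j, 1 ≤ j → j ≤ l → M.Conn (S j) ∧ M.Conn (S j)ᶜ) ∧
    (∀ j, 1 ≤ j → j < l → θ * M.Q (S j)ᶜ (S j) ≤ M.Q (S (j + 1) \ S j) (S j))

/-- The maximum, over `θ`-bottleneck sequences, of `∑ j, 1/Φ(S j)`. -/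
def maxBotSum (θ : ℝ) : ℝ :=
  sSup {x | ∃ (l : ℕ) (S : ℕ → Finset V),
    M.IsBottleneckSeq θ l S ∧ x = ∑ j ∈ Finset.Icc 1 l, 1 / M.Phi (S j)}

/-- The maximum, over `1`-bottleneck sequences, of `∑ j, |S j| * |(S j)ᶜ|`. -/
def maxBotCardProd : ℝ :=
  sSup {x | ∃ (l : ℕ) (S : ℕ → Finset V),
    M.IsBottleneckSeq 1 l S ∧
      x = ∑ j ∈ Finset.Icc 1 l, ((S j).card : ℝ) * ((S j)ᶜ.card : ℝ)}

/-- Total variation distance between the time-`n` distribution of the chain started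
at `v`, and the stationary distribution. -/
def tvDist (n : ℕ) (v : V) : ℝ :=
  ⨆ A : Finset V, |∑ u ∈ A, (M.stepDist n v u - M.pi u)|

/-- The total variation mixing time. -/
def tMix : ℕ := sInf {n : ℕ | ∀ v, M.tvDist n v ≤ 1 / 4}

/-- Exit frequencies `x v = E_s[#{k < τ : X_k = v}]` of a stopping rule `τ` from `s`
to `π`.  (By a theorem of Lovász and Winkler, a vector arises this way from some
stopping rule from `s` to `π` iff it is nonnegative and satisfies the balance
equations below; moreover `E_s[τ] = ∑ v, x v`.) -/
def IsExitMeasure (s : V) (x : V → ℝ) : Prop :=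
  (∀ v, 0 ≤ x v) ∧
    ∀ v, (if v = s then (1 : ℝ) else 0) + ∑ u, x u * M.P u v = M.pi v + x v

/-- `inf E_s[τ]` over all stopping rules `τ` from `s` to `π`. -/
def stopTimeFrom (s : V) : ℝ :=
  sInf {E | ∃ x : V → ℝ, M.IsExitMeasure s x ∧ E = ∑ v, x v}

/-- `t_stop = max_s inf E_s[τ]`. -/
def tStop : ℝ := ⨆ s : V, M.stopTimeFrom s

/-- `avoidProb A n v = P_v(H(A) > n)`. -/
def avoidProb (A : Finset V) : ℕ → V → ℝ
  | 0, v => if v ∈ A then 0 else 1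
  | n + 1, v => if v ∈ A then 0 else ∑ w, M.P v w * avoidProb A n w

/-- `E_v[H(A)]`, the expected hitting time of `A` from `v`. -/
def expHit (v : V) (A : Finset V) : ℝ := ∑' n : ℕ, M.avoidProb A n v

/-- `E_v[H⁺(A)]`, where `H⁺(A) = min {n ≥ 1 : X_n ∈ A}`. -/
def expHitPlus (v : V) (A : Finset V) : ℝ :=
  1 + ∑ w, M.P v w * M.expHit w A

/-- `t_hit(δ) = max {E_v[H(A)] : v ∈ V, π(A) ≥ δ}`. -/
def tHit (δ : ℝ) : ℝ :=
  sSup {x | ∃ (v : V) (A : Finset V), δ ≤ M.piSet A ∧ x = M.expHit v A}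

/-- `hitProbLE n v u = P_v(H(u) ≤ n)`. -/
def hitProbLE : ℕ → V → V → ℝ
  | 0, v, u => if v = u then 1 else 0
  | n + 1, v, u => if v = u then 1 else ∑ w, M.P v w * hitProbLE n w u

/-- `v` is `α`-near to `u`: `π(v) P_v(H(u) ≤ 1/α) ≥ α π(u)`. -/
def Near (α : ℝ) (v u : V) : Prop :=
  α * M.pi u ≤ M.pi v * M.hitProbLE ⌊1 / α⌋₊ v u

/-- `A` is `α`-near to `B`: every vertex of `A` is `α`-near to some vertex of `B`. -/
def NearSet (α : ℝ) (A : Set V) (B : Finset V) : Prop :=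
  ∀ v ∈ A, ∃ u ∈ B, M.Near α v u

/-- The inner boundary `∂ⁱ A`. -/
def innerBoundary (A : Finset V) : Set V :=
  {v | v ∈ A ∧ ∃ u, u ∉ A ∧ 0 < M.P u v}

/-- `B` is a `β`-adjustment of `A`. -/
def Adjustment (β : ℝ) (A B : Finset V) : Prop :=
  ∀ S : Finset V, S ⊆ Bᶜ → M.Conn (A ∪ S) →
    β * M.Q (B ∪ S)ᶜ (B ∪ S) ≤ M.Q (B ∪ S)ᶜ (A ∪ S)

/-- A `γ`-valid move for Crawler, from `(C, D)` to `(C', D)`. -/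
def CrawlerMove (γ : ℝ) (C D C' : Finset V) : Prop :=
  C ⊆ C' ∧ C' \ C ⊆ Dᶜ ∧ M.Conn C' ∧ M.Q (D ∪ C')ᶜ C ≤ γ * M.Q Dᶜ C

/-- An `(s,α,β)`-valid move for Dasher, from `(C, D)` to `(C, D')`. -/
def DasherMove (s : V) (α β : ℝ) (C D D' : Finset V) : Prop :=
  D ∪ C ⊆ D' ∧ M.Conn D'ᶜ ∧ M.NearSet α (M.innerBoundary D') C ∧
    M.Adjustment β C D' ∧ (s ∈ D' → (∃ u ∈ C, M.Near α s u) ∧ D' = Finset.univ)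

/-- `((C i, D i), 0 ≤ i ≤ k)` is an `(s,α,β,γ)`-valid sequence. -/
def ValidSeq (s : V) (α β γ : ℝ) (k : ℕ) (C D : ℕ → Finset V) : Prop :=
  C 0 = ∅ ∧ D 0 = ∅ ∧
    ∀ i, i < k → M.CrawlerMove γ (C i) (D i) (C (i + 1)) ∧
      M.DasherMove s α β (C (i + 1)) (D i) (D (i + 1))

/-- `((C i, D i), 0 ≤ i ≤ l + 1)` is an `(s,α,β,γ)`-valid game. -/
def ValidGame (s : V) (α β γ : ℝ) (l : ℕ) (C D : ℕ → Finset V) : Prop :=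
  M.ValidSeq s α β γ (l + 1) C D ∧ D (l + 1) = Finset.univ

end MarkovChain

namespace MarkovChain

variable {V : Type} [Fintype V] [DecidableEq V] (M : MarkovChain V)

lemma stepDist_nonneg : ∀ (n : ℕ) (u v : V), 0 ≤ M.stepDist n u v
  | 0, u, v => by simp only [stepDist]; split <;> norm_num
  | n + 1, u, v => Finset.sum_nonneg fun w _ =>
      mul_nonneg (stepDist_nonneg n u w) (M.P_nonneg w v)

lemma stepDist_rowsum : ∀ (n : ℕ) (u : V), ∑ v, M.stepDist n u v = 1
  | 0, u => by simp [stepDist]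
  | n + 1, u => by
      simp only [stepDist]
      rw [Finset.sum_comm]
      have h : ∀ w ∈ Finset.univ, ∑ v, M.stepDist n u w * M.P w v = M.stepDist n u w := by
        intro w _
        rw [← Finset.mul_sum, M.P_rowsum, mul_one]
      rw [Finset.sum_congr rfl h]
      exact stepDist_rowsum n u

lemma stepDist_add (m n : ℕ) (u v : V) :
    M.stepDist (m + n) u v = ∑ w, M.stepDist m u w * M.stepDist n w v := by
  induction n generalizing v with
  | zero => simp [stepDist, mul_ite]
  | succ n ih =>
    show M.stepDist ((m + n) + 1) u v = _
    simp only [stepDist]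
    calc ∑ w, M.stepDist (m + n) u w * M.P w v
        = ∑ w, (∑ z, M.stepDist m u z * M.stepDist n z w) * M.P w v :=
          Finset.sum_congr rfl fun w _ => by rw [ih]
      _ = ∑ z, M.stepDist m u z * ∑ w, M.stepDist n z w * M.P w v := by
          simp only [Finset.sum_mul]
          rw [Finset.sum_comm]
          simp only [Finset.mul_sum, mul_assoc]

lemma stepDist_one (u v : V) : M.stepDist 1 u v = M.P u v := by
  simp [stepDist]

lemma stepDist_succ_left (n : ℕ) (u v : V) :
    M.stepDist (n + 1) u v = ∑ w, M.P u w * M.stepDist n w v := by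
  rw [show n + 1 = 1 + n by ring, M.stepDist_add 1 n]
  simp [stepDist_one]

lemma stepDist_stat (n : ℕ) (v : V) : ∑ u, M.pi u * M.stepDist n u v = M.pi v := by
  induction n generalizing v with
  | zero => simp [stepDist, mul_ite]
  | succ n ih =>
    simp only [stepDist, Finset.mul_sum]
    rw [Finset.sum_comm]
    have h : ∀ w ∈ Finset.univ,
        ∑ x, M.pi x * (M.stepDist n x w * M.P w v) = M.pi w * M.P w v := by
      intro w _
      rw [← ih w]
      rw [Finset.sum_mul]
      exact Finset.sum_congr rfl fun x _ => by ring
    rw [Finset.sum_congr rfl h]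
    exact M.pi_stat v

end MarkovChain
namespace MarkovChain

variable {V : Type} [Fintype V] [DecidableEq V] (M : MarkovChain V)

lemma nonempty_V {V' : Type} [Fintype V'] [DecidableEq V'] (M' : MarkovChain V') :
    Nonempty V' := by
  have h2 := M'.pi_sum
  by_contra h
  rw [Finset.univ_eq_empty_iff.2 (not_nonempty_iff.1 h), Finset.sum_empty] at h2
  norm_num at h2

lemma stepDist_pos_succ (hl : M.Lazy) {n : ℕ} {u v : V}
    (h : 0 < M.stepDist n u v) : 0 < M.stepDist (n + 1) u v := by
  have hterm : 0 < M.stepDist n u v * M.P v v := by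
    rw [hl v]; positivity
  calc (0:ℝ) < M.stepDist n u v * M.P v v := hterm
    _ ≤ ∑ w, M.stepDist n u w * M.P w v :=
      Finset.single_le_sum (fun w _ => mul_nonneg (M.stepDist_nonneg n u w) (M.P_nonneg w v))
        (Finset.mem_univ v)

lemma stepDist_pos_mono (hl : M.Lazy) {n m : ℕ} (hnm : n ≤ m) {u v : V}
    (h : 0 < M.stepDist n u v) : 0 < M.stepDist m u v := by
  induction m, hnm using Nat.le_induction with
  | base => exact h
  | succ m _ ih => exact M.stepDist_pos_succ hl ih

lemma doeblin (hirr : M.Irreducible) (hl : M.Lazy) :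
    ∃ N : ℕ, ∀ u v, 0 < M.stepDist N u v := by
  have hc : ∀ p : V × V, ∃ n, 0 < M.stepDist n p.1 p.2 := fun p => hirr p.1 p.2
  choose f hf using hc
  refine ⟨Finset.univ.sup f, fun u v => ?_⟩
  exact M.stepDist_pos_mono hl (Finset.le_sup (Finset.mem_univ (u, v))) (hf (u, v))

/-- Doeblin-type contraction: the chain eventually mixes. -/
lemma mixing_exists (hirr : M.Irreducible) (hl : M.Lazy) :
    ∃ n : ℕ, ∀ v, M.tvDist n v ≤ 1 / 4 := by
  obtain ⟨N, hN⟩ := M.doeblin hirr hl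
  have hne : Nonempty V := M.nonempty_V
  have hprodne : (Finset.univ ×ˢ Finset.univ : Finset (V × V)).Nonempty := by
    simp [Finset.univ_nonempty]
  set δ : ℝ := min (1/2)
    ((Finset.univ ×ˢ Finset.univ).inf' hprodne fun p => M.stepDist N p.1 p.2 / M.pi p.2) with hδ
  have hδpos : 0 < δ := by
    refine lt_min (by norm_num) ?_
    rw [Finset.lt_inf'_iff]
    intro p _
    exact div_pos (hN p.1 p.2) (M.pi_pos p.2)
  have hδhalf : δ ≤ 1/2 := min_le_left _ _
  have hδle : ∀ u v, δ * M.pi v ≤ M.stepDist N u v := by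
    intro u v
    have h1 : δ ≤ M.stepDist N u v / M.pi v := by
      refine le_trans (min_le_right _ _) ?_
      exact Finset.inf'_le (fun p : V × V => M.stepDist N p.1 p.2 / M.pi p.2)
        (by simp : ((u,v) : V × V) ∈ Finset.univ ×ˢ Finset.univ)
    rw [le_div_iff₀ (M.pi_pos v)] at h1
    linarith
  have h1δ : (0:ℝ) < 1 - δ := by linarith
  set Q : V → V → ℝ := fun u v => (M.stepDist N u v - δ * M.pi v) / (1 - δ) with hQ
  have hQnn : ∀ u v, 0 ≤ Q u v := fun u v =>
    div_nonneg (by linarith [hδle u v]) (le_of_lt h1δ)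
  have hQrow : ∀ u, ∑ v, Q u v = 1 := by
    intro u
    rw [hQ]
    simp only [div_eq_mul_inv, ← Finset.sum_mul]
    rw [Finset.sum_sub_distrib, M.stepDist_rowsum, ← Finset.mul_sum, M.pi_sum]
    field_simp
  -- main contraction claim
  have main : ∀ k : ℕ, ∀ μ : V → ℝ, (∀ v, 0 ≤ μ v) → (∑ v, μ v) = 1 →
      ∀ A : Finset V, |∑ u ∈ A, ((∑ w, μ w * M.stepDist (k * N) w u) - M.pi u)| ≤ (1-δ)^k := by
    intro k
    induction k with
    | zero =>
      intro μ hμnn hμsum A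
      have h0 : ∀ u, (∑ w, μ w * M.stepDist 0 w u) = μ u := by
        intro u
        simp [stepDist, mul_ite]
      simp only [Nat.zero_mul, h0, pow_zero]
      have hA1 : ∑ u ∈ A, μ u ≤ 1 := by
        rw [← hμsum]
        exact Finset.sum_le_sum_of_subset_of_nonneg (Finset.subset_univ A)
          (fun v _ _ => hμnn v)
      have hA0 : 0 ≤ ∑ u ∈ A, μ u := Finset.sum_nonneg fun v _ => hμnn v
      have hpiA1 : ∑ u ∈ A, M.pi u ≤ 1 := by
        rw [← M.pi_sum]
        exact Finset.sum_le_sum_of_subset_of_nonneg (Finset.subset_univ A)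
          (fun v _ _ => le_of_lt (M.pi_pos v))
      have hpiA0 : 0 ≤ ∑ u ∈ A, M.pi u := Finset.sum_nonneg fun v _ => le_of_lt (M.pi_pos v)
      rw [Finset.sum_sub_distrib, abs_le]
      constructor <;> linarith
    | succ k ih =>
      intro μ hμnn hμsum A
      set ν : V → ℝ := fun z => ∑ w, μ w * Q w z with hν
      have hνnn : ∀ z, 0 ≤ ν z := fun z =>
        Finset.sum_nonneg fun w _ => mul_nonneg (hμnn w) (hQnn w z)
      have hνsum : ∑ z, ν z = 1 := by
        rw [hν]
        simp only
        rw [Finset.sum_comm]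
        have h5 : ∀ w ∈ Finset.univ, ∑ z, μ w * Q w z = μ w := by
          intro w _; rw [← Finset.mul_sum, hQrow, mul_one]
        rw [Finset.sum_congr rfl h5, hμsum]
      have hdecomp : ∀ u, (∑ w, μ w * M.stepDist ((k+1) * N) w u)
          = δ * M.pi u + (1-δ) * (∑ z, ν z * M.stepDist (k * N) z u) := by
        intro u
        have hsplit : (k+1) * N = N + k * N := by ring
        have h2 : ∀ w, M.stepDist ((k+1)*N) w u
            = ∑ z, M.stepDist N w z * M.stepDist (k*N) z u := by
          intro w; rw [hsplit, M.stepDist_add]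
        have h3 : ∀ w z, M.stepDist N w z = δ * M.pi z + (1-δ) * Q w z := by
          intro w z; rw [hQ]; field_simp; ring
        calc ∑ w, μ w * M.stepDist ((k+1)*N) w u
            = ∑ w, ∑ z, μ w * ((δ * M.pi z + (1-δ) * Q w z) * M.stepDist (k*N) z u) := by
              refine Finset.sum_congr rfl fun w _ => ?_
              rw [h2 w, Finset.mul_sum]
              exact Finset.sum_congr rfl fun z _ => by rw [← h3]
          _ = ∑ z, ∑ w, μ w * ((δ * M.pi z + (1-δ) * Q w z) * M.stepDist (k*N) z u) :=
              Finset.sum_comm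
          _ = ∑ z, (δ * (M.pi z * M.stepDist (k*N) z u)
                + (1-δ) * (ν z * M.stepDist (k*N) z u)) := by
              refine Finset.sum_congr rfl fun z _ => ?_
              have hrw : ∀ w, μ w * ((δ * M.pi z + (1-δ) * Q w z) * M.stepDist (k*N) z u)
                  = δ * (M.pi z * M.stepDist (k*N) z u) * μ w
                    + (1-δ) * ((μ w * Q w z) * M.stepDist (k*N) z u) := fun w => by ring
              rw [Finset.sum_congr rfl fun w _ => hrw w, Finset.sum_add_distrib]
              congr 1
              · rw [← Finset.mul_sum, hμsum, mul_one]
              · rw [hν]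
                simp only
                rw [← Finset.mul_sum, ← Finset.sum_mul]
          _ = δ * M.pi u + (1-δ) * (∑ z, ν z * M.stepDist (k*N) z u) := by
              rw [Finset.sum_add_distrib, ← Finset.mul_sum, ← Finset.mul_sum,
                M.stepDist_stat]
      have hgoal : ∑ u ∈ A, ((∑ w, μ w * M.stepDist ((k+1)*N) w u) - M.pi u)
          = (1-δ) * ∑ u ∈ A, ((∑ z, ν z * M.stepDist (k*N) z u) - M.pi u) := by
        rw [Finset.mul_sum]
        refine Finset.sum_congr rfl fun u _ => ?_
        rw [hdecomp u]; ring
      rw [hgoal, abs_mul, abs_of_pos h1δ, pow_succ, mul_comm ((1-δ)^k)]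
      exact mul_le_mul_of_nonneg_left (ih ν hνnn hνsum A) (le_of_lt h1δ)
  obtain ⟨k, hk⟩ : ∃ k : ℕ, (1-δ)^k < 1/4 :=
    exists_pow_lt_of_lt_one (by norm_num) (by linarith)
  refine ⟨k * N, fun v => ?_⟩
  refine Real.iSup_le (fun A => ?_) (by norm_num)
  have hμ : ∀ u, (∑ w, (if w = v then (1:ℝ) else 0) * M.stepDist (k*N) w u)
      = M.stepDist (k*N) v u := by
    intro u
    rw [Finset.sum_eq_single v]
    · simp
    · intro b _ hb; simp [hb]
    · intro h; exact absurd (Finset.mem_univ v) h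
  have hmain := main k (fun w => if w = v then 1 else 0)
    (by intro w; split <;> norm_num) (by simp) A
  simp only [hμ] at hmain
  exact le_trans hmain (le_of_lt hk)

/-- The mixing time witnesses the mixing property. -/
lemma tMix_mem (hirr : M.Irreducible) (hl : M.Lazy) :
    ∀ v, M.tvDist M.tMix v ≤ 1 / 4 :=
  Nat.sInf_mem (M.mixing_exists hirr hl)

lemma tMix_pos (hirr : M.Irreducible) (hl : M.Lazy)
    (h2 : ∃ v w : V, v ≠ w) : 1 ≤ M.tMix := by
  rw [Nat.one_le_iff_ne_zero]
  intro h0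
  have hmem : ∀ v, M.tvDist 0 v ≤ 1/4 := by
    rw [← h0]; exact M.tMix_mem hirr hl
  obtain ⟨v, w, hvw⟩ := h2
  -- find a vertex with pi ≤ 1/2
  have hsum : M.pi v + M.pi w ≤ 1 := by
    rw [← M.pi_sum]
    rw [show M.pi v + M.pi w = ∑ u ∈ {v, w}, M.pi u by
      rw [Finset.sum_pair hvw]]
    exact Finset.sum_le_sum_of_subset_of_nonneg (Finset.subset_univ _)
      (fun x _ _ => le_of_lt (M.pi_pos x))
  have hx : ∃ x : V, M.pi x ≤ 1/2 := by
    by_cases h : M.pi v ≤ 1/2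
    · exact ⟨v, h⟩
    · exact ⟨w, by linarith⟩
  obtain ⟨x, hx⟩ := hx
  have hlow : (1:ℝ)/2 ≤ M.tvDist 0 x := by
    have hbdd : BddAbove (Set.range fun A : Finset V =>
        |∑ u ∈ A, (M.stepDist 0 x u - M.pi u)|) :=
      Set.Finite.bddAbove (Set.finite_range _)
    have hA : |∑ u ∈ ({x} : Finset V), (M.stepDist 0 x u - M.pi u)| ≤ M.tvDist 0 x :=
      le_ciSup hbdd ({x} : Finset V)
    have hxx : M.stepDist 0 x x = 1 := by simp [stepDist]
    have habs : |∑ u ∈ ({x} : Finset V), (M.stepDist 0 x u - M.pi u)| = 1 - M.pi x := by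
      rw [Finset.sum_singleton, hxx, abs_of_nonneg] <;> linarith [M.pi_pos x, M.pi_sum ▸ hsum]
    rw [habs] at hA
    linarith
  linarith [hmem x]

end MarkovChain
/-- Walking from inside `A` to outside `A` must use a crossing edge. -/
lemma walk_cross_set {V : Type} {G : SimpleGraph V} {A : Set V} :
    ∀ {x y : V} (p : G.Walk x y), x ∈ A → y ∉ A →
    ∃ c d, G.Adj c d ∧ c ∈ A ∧ d ∉ A ∧ c ∈ p.support ∧ d ∈ p.support := by
  intro x y p
  induction p with
  | nil => intro hx hy; exact absurd hx hy
  | @cons u v w h q ih =>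
    intro hx hy
    by_cases hv : v ∈ A
    · obtain ⟨c, d, hcd, hc, hd, hcs, hds⟩ := ih hv hy
      exact ⟨c, d, hcd, hc, hd, by simp [SimpleGraph.Walk.support_cons, hcs],
        by simp [SimpleGraph.Walk.support_cons, hds]⟩
    · exact ⟨u, v, h, hx, hv, SimpleGraph.Walk.start_mem_support _,
        by simp [SimpleGraph.Walk.support_cons, SimpleGraph.Walk.start_mem_support]⟩

namespace MarkovChain

variable {V : Type} [Fintype V] [DecidableEq V] (M : MarkovChain V)

/-- Vertices on the `u`-side of the (potential) edge `{u,w}`. -/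
noncomputable def side (u w : V) : Finset V :=
  Set.Finite.toFinset (Set.toFinite {x | (M.graph.deleteEdges {s(u,w)}).Reachable x u})

lemma mem_side {u w x : V} :
    x ∈ M.side u w ↔ (M.graph.deleteEdges {s(u,w)}).Reachable x u := by
  simp [side, Set.Finite.mem_toFinset]

lemma self_mem_side (u w : V) : u ∈ M.side u w :=
  M.mem_side.2 (SimpleGraph.Reachable.refl u)

lemma P_zero_of_not_adj {x y : V} (hne : x ≠ y) (hadj : ¬ M.graph.Adj x y) :
    M.P x y = 0 := by
  have h2 : ¬ (0 < M.P x y ∨ 0 < M.P y x) := fun h => hadj ⟨hne, h⟩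
  push_neg at h2
  exact le_antisymm (h2.1) (M.P_nonneg x y)

section Tree
variable {M}
variable (htree : M.graph.IsTree)

include htree

lemma not_mem_side {u w : V} (hadj : M.graph.Adj u w) : w ∉ M.side u w := by
  intro hmem
  have hbr := (SimpleGraph.isAcyclic_iff_forall_edge_isBridge.1 htree.2)
    (show s(u,w) ∈ M.graph.edgeSet from hadj)
  rw [SimpleGraph.isBridge_iff] at hbr
  exact hbr ((M.mem_side.1 hmem).symm)

lemma side_crossing {u w x y : V} (hadj : M.graph.Adj u w)
    (hx : x ∈ M.side u w) (hy : y ∉ M.side u w) (hxy : M.graph.Adj x y) :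
    x = u ∧ y = w := by
  by_cases he : s(x,y) = s(u,w)
  · rcases Sym2.eq_iff.1 he with ⟨h1, h2⟩ | ⟨h1, h2⟩
    · exact ⟨h1, h2⟩
    · exfalso; subst h1; exact (not_mem_side htree hadj) hx
  · exfalso
    have hadj' : (M.graph.deleteEdges {s(u,w)}).Adj x y := by
      rw [SimpleGraph.deleteEdges_adj]
      exact ⟨hxy, by simpa using he⟩
    exact hy (M.mem_side.2 (hadj'.symm.reachable.trans (M.mem_side.1 hx)))

/-- If `A` is connected, contains `b`, avoids `a`, then `A` is inside the `b`-side. -/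
lemma subset_side {A : Finset V} (hA : M.Conn A) {b a : V}
    (hb : b ∈ A) (ha : a ∉ A) {x : V} (hx : x ∈ A) : x ∈ M.side b a := by
  obtain ⟨p, hp⟩ := hA x (by simpa using hx) b (by simpa using hb)
  have hedges : ∀ e ∈ p.edges, e ∉ ({s(b,a)} : Set (Sym2 V)) := by
    intro e hep hmem
    rw [Set.mem_singleton_iff] at hmem
    subst hmem
    exact ha (by simpa using hp a (p.snd_mem_support_of_mem_edges hep))
  exact M.mem_side.2 ⟨p.toDeleteEdges {s(b,a)} hedges⟩

/-- For a cut with both sides connected, the side set is exactly `A`. -/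
lemma side_eq {A : Finset V} (hA : M.Conn A) (hAc : M.Conn Aᶜ) {b a : V}
    (hb : b ∈ A) (ha : a ∉ A) (hadj : M.graph.Adj b a) : M.side b a = A := by
  ext x
  constructor
  · intro hx
    by_contra hxA
    -- x ∉ A : walk from a to x inside Aᶜ avoiding the edge
    obtain ⟨p, hp⟩ := hAc a (by simpa using ha) x (by simpa using hxA)
    have hedges : ∀ e ∈ p.edges, e ∉ ({s(b,a)} : Set (Sym2 V)) := by
      intro e hep hmem
      rw [Set.mem_singleton_iff] at hmem
      subst hmem
      have := hp b (p.fst_mem_support_of_mem_edges hep)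
      simp [Finset.mem_compl] at this
      exact this hb
    have hreach : (M.graph.deleteEdges {s(b,a)}).Reachable a x :=
      ⟨p.toDeleteEdges {s(b,a)} hedges⟩
    have : a ∈ M.side b a := M.mem_side.2 (hreach.trans (M.mem_side.1 hx))
    exact (not_mem_side htree hadj) this
  · exact fun hx => subset_side htree hA hb ha hx

lemma cut_unique {A : Finset V} (hA : M.Conn A) (hAc : M.Conn Aᶜ) {b a b' a' : V}
    (hb : b ∈ A) (ha : a ∉ A) (hadj : M.graph.Adj b a)
    (hb' : b' ∈ A) (ha' : a' ∉ A) (hadj' : M.graph.Adj b' a') : b' = b ∧ a' = a := by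
  have hside := side_eq htree hA hAc hb ha hadj
  exact side_crossing htree hadj (by rw [hside]; exact hb') (by rw [hside]; exact ha') hadj'

end Tree

lemma cut_exists (htree : M.graph.IsTree) {A : Finset V}
    (hAne : A.Nonempty) (hAcne : Aᶜ.Nonempty) :
    ∃ b a, b ∈ A ∧ a ∉ A ∧ M.graph.Adj b a := by
  obtain ⟨x, hx⟩ := hAne
  obtain ⟨y, hy⟩ := hAcne
  rw [Finset.mem_compl] at hy
  obtain ⟨p⟩ := htree.1.preconnected x y
  obtain ⟨c, d, hcd, hc, hd, -, -⟩ :=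
    walk_cross_set (A := (↑A : Set V)) p (by simpa using hx) (by simpa using hy)
  exact ⟨c, d, by simpa using hc, by simpa using hd, hcd⟩

lemma exists_cross_pos (hirr : M.Irreducible) {A : Finset V}
    (hAne : A.Nonempty) (hAcne : Aᶜ.Nonempty) :
    ∃ x ∈ A, ∃ y ∈ Aᶜ, 0 < M.P x y := by
  obtain ⟨x₀, hx₀⟩ := hAne
  obtain ⟨y₀, hy₀⟩ := hAcne
  have hy₀' : y₀ ∉ A := Finset.mem_compl.1 hy₀
  obtain ⟨n, hn⟩ := hirr x₀ y₀
  have key : ∀ n, ∀ x, x ∈ A → 0 < M.stepDist n x y₀ →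
      ∃ x ∈ A, ∃ y ∈ Aᶜ, 0 < M.P x y := by
    intro n
    induction n with
    | zero =>
      intro x hx hn
      by_cases h : x = y₀
      · exact absurd (h ▸ hx) hy₀'
      · simp [stepDist, h] at hn
    | succ n ih =>
      intro x hx hn
      rw [M.stepDist_succ_left] at hn
      have hex : ∃ w, 0 < M.P x w * M.stepDist n w y₀ := by
        by_contra hc
        push_neg at hc
        have : ∑ w, M.P x w * M.stepDist n w y₀ ≤ 0 :=
          Finset.sum_nonpos fun w _ => hc w
        linarith
      obtain ⟨w, hw⟩ := hex
      have hP : 0 < M.P x w := by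
        rcases lt_or_ge 0 (M.P x w) with h | h
        · exact h
        · exfalso
          have h0 : M.P x w = 0 := le_antisymm h (M.P_nonneg _ _)
          rw [h0, zero_mul] at hw; exact lt_irrefl _ hw
      have hS : 0 < M.stepDist n w y₀ := by
        rcases lt_or_ge 0 (M.stepDist n w y₀) with h | h
        · exact h
        · exfalso
          have h0 : M.stepDist n w y₀ = 0 := le_antisymm h (M.stepDist_nonneg _ _ _)
          rw [h0, mul_zero] at hw; exact lt_irrefl _ hw
      by_cases hwA : w ∈ A
      · exact ih w hwA hS
      · exact ⟨x, hx, w, Finset.mem_compl.2 hwA, hP⟩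
  exact key n x₀ hx₀ hn

end MarkovChain
namespace MarkovChain

variable {V : Type} [Fintype V] [DecidableEq V] (M : MarkovChain V)

/-- Collapse a double sum over a cut with a unique crossing edge (outgoing). -/
lemma sum_cross_out {A : Finset V} (f : V → ℝ) {b a : V}
    (hU : ∀ x ∈ A, ∀ y ∈ Aᶜ, M.graph.Adj x y → x = b ∧ y = a)
    (hb : b ∈ A) (ha : a ∈ Aᶜ) :
    ∑ x ∈ A, ∑ y ∈ Aᶜ, f x * M.P x y = f b * M.P b a := by
  rw [Finset.sum_eq_single b]
  · rw [Finset.sum_eq_single a]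
    · intro y hy hya
      by_cases hadj : M.graph.Adj b y
      · exact absurd (hU b hb y hy hadj).2 hya
      · have hne : b ≠ y := fun h => (Finset.mem_compl.1 hy) (h ▸ hb)
        rw [M.P_zero_of_not_adj hne hadj, mul_zero]
    · intro h; exact absurd ha h
  · intro x hx hxb
    refine Finset.sum_eq_zero fun y hy => ?_
    by_cases hadj : M.graph.Adj x y
    · exact absurd (hU x hx y hy hadj).1 hxb
    · have hne : x ≠ y := fun h => (Finset.mem_compl.1 hy) (h ▸ hx)
      rw [M.P_zero_of_not_adj hne hadj, mul_zero]
  · intro h; exact absurd hb h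

/-- Collapse a double sum over a cut with a unique crossing edge (incoming). -/
lemma sum_cross_in {A : Finset V} (f : V → ℝ) {b a : V}
    (hU : ∀ x ∈ A, ∀ y ∈ Aᶜ, M.graph.Adj x y → x = b ∧ y = a)
    (hb : b ∈ A) (ha : a ∈ Aᶜ) :
    ∑ x ∈ A, ∑ y ∈ Aᶜ, f y * M.P y x = f a * M.P a b := by
  rw [Finset.sum_eq_single b]
  · rw [Finset.sum_eq_single a]
    · intro y hy hya
      by_cases hadj : M.graph.Adj b y
      · exact absurd (hU b hb y hy hadj).2 hya
      · have hne : y ≠ b := fun h => (Finset.mem_compl.1 hy) (h ▸ hb)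
        rw [M.P_zero_of_not_adj hne (fun hc => hadj hc.symm), mul_zero]
    · intro h; exact absurd ha h
  · intro x hx hxb
    refine Finset.sum_eq_zero fun y hy => ?_
    by_cases hadj : M.graph.Adj x y
    · exact absurd (hU x hx y hy hadj).1 hxb
    · have hne : y ≠ x := fun h => (Finset.mem_compl.1 hy) (h ▸ hx)
      rw [M.P_zero_of_not_adj hne (fun hc => hadj hc.symm), mul_zero]
  · intro h; exact absurd hb h

lemma Q_balance (A : Finset V) : M.Q A Aᶜ = M.Q Aᶜ A := by
  have h1 : ∑ u ∈ A, M.pi u = M.Q A A + M.Q A Aᶜ := by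
    unfold Q
    rw [← Finset.sum_add_distrib]
    refine Finset.sum_congr rfl fun u _ => ?_
    rw [Finset.sum_add_sum_compl, ← Finset.mul_sum, M.P_rowsum, mul_one]
  have h2 : ∑ v ∈ A, M.pi v = M.Q A A + M.Q Aᶜ A := by
    unfold Q
    rw [Finset.sum_comm (s := A) (t := A), Finset.sum_comm (s := Aᶜ) (t := A),
      ← Finset.sum_add_distrib]
    refine Finset.sum_congr rfl fun v _ => ?_
    rw [Finset.sum_add_sum_compl, M.pi_stat]
  linarith

lemma Q_eval {A : Finset V} {b a : V}
    (hU : ∀ x ∈ A, ∀ y ∈ Aᶜ, M.graph.Adj x y → x = b ∧ y = a)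
    (hb : b ∈ A) (ha : a ∈ Aᶜ) :
    M.Q A Aᶜ = M.pi b * M.P b a :=
  M.sum_cross_out M.pi hU hb ha

lemma reversible (hirr : M.Irreducible) (htree : M.graph.IsTree) (u v : V) :
    M.pi u * M.P u v = M.pi v * M.P v u := by
  by_cases hne : u = v
  · rw [hne]
  by_cases hadj : M.graph.Adj u v
  · set A := M.side u v with hA
    have hb : u ∈ A := M.self_mem_side u v
    have ha : v ∈ Aᶜ := Finset.mem_compl.2 (not_mem_side htree hadj)
    have hU : ∀ x ∈ A, ∀ y ∈ Aᶜ, M.graph.Adj x y → x = u ∧ y = v := fun x hx y hy hxy =>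
      side_crossing htree hadj hx (Finset.mem_compl.1 hy) hxy
    have h1 : M.Q A Aᶜ = M.pi u * M.P u v := M.sum_cross_out M.pi hU hb ha
    have h2 : M.Q Aᶜ A = M.pi v * M.P v u := by
      have : M.Q Aᶜ A = ∑ x ∈ A, ∑ y ∈ Aᶜ, M.pi y * M.P y x := by
        unfold Q; rw [Finset.sum_comm]
      rw [this, M.sum_cross_in M.pi hU hb ha]
    rw [← h1, ← h2, M.Q_balance]
  · rw [M.P_zero_of_not_adj hne hadj,
      M.P_zero_of_not_adj (fun h => hne h.symm) (fun h => hadj h.symm), mul_zero, mul_zero]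

lemma adj_pos (hirr : M.Irreducible) (htree : M.graph.IsTree) {u v : V}
    (hadj : M.graph.Adj u v) : 0 < M.P u v := by
  set A := M.side u v with hA
  have hb : u ∈ A := M.self_mem_side u v
  have ha : v ∈ Aᶜ := Finset.mem_compl.2 (not_mem_side htree hadj)
  obtain ⟨x, hx, y, hy, hpos⟩ := M.exists_cross_pos hirr ⟨u, hb⟩ ⟨v, ha⟩
  have hxy : M.graph.Adj x y := by
    refine ⟨fun h => (Finset.mem_compl.1 hy) (h ▸ hx), Or.inl hpos⟩
  obtain ⟨rfl, rfl⟩ := side_crossing htree hadj hx (Finset.mem_compl.1 hy) hxy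
  exact hpos

lemma Q_pos (hirr : M.Irreducible) {A : Finset V}
    (hAne : A.Nonempty) (hAcne : Aᶜ.Nonempty) : 0 < M.Q A Aᶜ := by
  obtain ⟨x, hx, y, hy, hpos⟩ := M.exists_cross_pos hirr hAne hAcne
  have hterm : 0 < ∑ z ∈ Aᶜ, M.pi x * M.P x z := by
    refine Finset.sum_pos' (fun z _ => mul_nonneg (le_of_lt (M.pi_pos x)) (M.P_nonneg x z))
      ⟨y, hy, mul_pos (M.pi_pos x) hpos⟩
  exact Finset.sum_pos' (fun u _ => Finset.sum_nonneg fun z _ =>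
    mul_nonneg (le_of_lt (M.pi_pos u)) (M.P_nonneg u z)) ⟨x, hx, hterm⟩

end MarkovChain
namespace MarkovChain

variable {V : Type} [Fintype V] [DecidableEq V] (M : MarkovChain V)

lemma avoid_nonneg (B : Finset V) : ∀ (n : ℕ) (v : V), 0 ≤ M.avoidProb B n v
  | 0, v => by simp only [avoidProb]; split <;> norm_num
  | n + 1, v => by
      simp only [avoidProb]
      split
      · exact le_refl 0
      · exact Finset.sum_nonneg fun w _ =>
          mul_nonneg (M.P_nonneg v w) (avoid_nonneg B n w)

lemma avoid_le_one (B : Finset V) : ∀ (n : ℕ) (v : V), M.avoidProb B n v ≤ 1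
  | 0, v => by simp only [avoidProb]; split <;> norm_num
  | n + 1, v => by
      simp only [avoidProb]
      split
      · norm_num
      · calc ∑ w, M.P v w * M.avoidProb B n w ≤ ∑ w, M.P v w := by
              refine Finset.sum_le_sum fun w _ => ?_
              have h1 := avoid_le_one B n w
              have h2 := M.P_nonneg v w
              have h3 := M.avoid_nonneg B n w
              nlinarith
          _ = 1 := M.P_rowsum v

lemma avoid_mem (B : Finset V) (n : ℕ) {v : V} (hv : v ∈ B) : M.avoidProb B n v = 0 := by
  cases n <;> simp [avoidProb, hv]

lemma avoid_add (B : Finset V) (m n : ℕ) (v : V) :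
    M.avoidProb B (m + n) v ≤ ∑ w, M.stepDist m v w * M.avoidProb B n w := by
  induction m generalizing v with
  | zero =>
    rw [zero_add]
    have : ∑ w, M.stepDist 0 v w * M.avoidProb B n w = M.avoidProb B n v := by
      rw [Finset.sum_eq_single v]
      · simp [stepDist]
      · intro b _ hb; simp [stepDist, Ne.symm hb]
      · intro h; exact absurd (Finset.mem_univ v) h
    rw [this]
  | succ m ih =>
    rw [show m + 1 + n = (m + n) + 1 by omega]
    simp only [avoidProb]
    split
    · exact Finset.sum_nonneg fun w _ => mul_nonneg (M.stepDist_nonneg _ _ _)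
        (M.avoid_nonneg B n w)
    · calc ∑ w, M.P v w * M.avoidProb B (m + n) w
          ≤ ∑ w, M.P v w * ∑ z, M.stepDist m w z * M.avoidProb B n z := by
            refine Finset.sum_le_sum fun w _ => ?_
            exact mul_le_mul_of_nonneg_left (ih w) (M.P_nonneg v w)
        _ = ∑ z, (∑ w, M.P v w * M.stepDist m w z) * M.avoidProb B n z := by
            simp only [Finset.mul_sum]
            rw [Finset.sum_comm]
            simp only [Finset.sum_mul]
            exact Finset.sum_congr rfl fun z _ => Finset.sum_congr rfl fun w _ => by ring
        _ = ∑ z, M.stepDist (m+1) v z * M.avoidProb B n z := by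
            refine Finset.sum_congr rfl fun z _ => ?_
            rw [← M.stepDist_succ_left]

section Decay

variable {B : Finset V} {m : ℕ} {α : ℝ}

lemma avoid_pow (hα : 0 < α) (hα1 : α ≤ 1)
    (hB : ∀ v, α ≤ ∑ w ∈ B, M.stepDist m v w) :
    ∀ (k : ℕ) (v : V), M.avoidProb B (k * (m+1)) v ≤ (1-α)^k := by
  intro k
  induction k with
  | zero => intro v; simpa using M.avoid_le_one B 0 v
  | succ k ih =>
    intro v
    have h1α : (0:ℝ) ≤ 1 - α := by linarith
    have hsplit : (k+1) * (m+1) = m + (1 + k * (m+1)) := by ring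
    rw [hsplit]
    calc M.avoidProb B (m + (1 + k*(m+1))) v
        ≤ ∑ w, M.stepDist m v w * M.avoidProb B (1 + k*(m+1)) w := M.avoid_add B _ _ v
      _ ≤ ∑ w, M.stepDist m v w * (if w ∈ B then 0 else (1-α)^k) := by
          refine Finset.sum_le_sum fun w _ => ?_
          refine mul_le_mul_of_nonneg_left ?_ (M.stepDist_nonneg _ _ _)
          rw [show 1 + k*(m+1) = k*(m+1) + 1 by ring]
          show M.avoidProb B (k*(m+1) + 1) w ≤ _
          simp only [avoidProb]
          split
          · exact le_refl 0
          · calc ∑ z, M.P w z * M.avoidProb B (k*(m+1)) z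
                ≤ ∑ z, M.P w z * (1-α)^k := by
                  refine Finset.sum_le_sum fun z _ => ?_
                  exact mul_le_mul_of_nonneg_left (ih z) (M.P_nonneg w z)
              _ = (1-α)^k := by rw [← Finset.sum_mul, M.P_rowsum, one_mul]
      _ = (1-α)^k * (∑ w, M.stepDist m v w) - (1-α)^k * ∑ w ∈ B, M.stepDist m v w := by
          rw [Finset.mul_sum, Finset.mul_sum,
            show ∑ w ∈ B, (1-α)^k * M.stepDist m v w
              = ∑ w, (if w ∈ B then (1-α)^k * M.stepDist m v w else 0) by
                rw [Finset.sum_ite_mem, Finset.univ_inter],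
            ← Finset.sum_sub_distrib]
          refine Finset.sum_congr rfl fun w _ => ?_
          split <;> ring
      _ ≤ (1-α)^k * 1 - (1-α)^k * α := by
          have h1 := M.stepDist_rowsum m v
          have h2 := hB v
          have h3 : (0:ℝ) ≤ (1-α)^k := pow_nonneg h1α k
          have h4 : (1-α)^k * α ≤ (1-α)^k * ∑ w ∈ B, M.stepDist m v w :=
            mul_le_mul_of_nonneg_left h2 h3
          rw [h1]
          linarith
      _ = (1-α)^(k+1) := by ring

lemma avoid_le_pow (hα : 0 < α) (hα1 : α ≤ 1)
    (hB : ∀ v, α ≤ ∑ w ∈ B, M.stepDist m v w)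
    {k n : ℕ} (hkn : k * (m+1) ≤ n) (v : V) :
    M.avoidProb B n v ≤ (1-α)^k := by
  have h1α : (0:ℝ) ≤ 1 - α := by linarith
  calc M.avoidProb B n v = M.avoidProb B ((n - k*(m+1)) + k*(m+1)) v := by
        rw [Nat.sub_add_cancel hkn]
    _ ≤ ∑ w, M.stepDist (n - k*(m+1)) v w * M.avoidProb B (k*(m+1)) w :=
        M.avoid_add B _ _ v
    _ ≤ ∑ w, M.stepDist (n - k*(m+1)) v w * (1-α)^k := by
        refine Finset.sum_le_sum fun w _ => ?_
        exact mul_le_mul_of_nonneg_left (M.avoid_pow hα hα1 hB k w) (M.stepDist_nonneg _ _ _)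
    _ = (1-α)^k := by rw [← Finset.sum_mul, M.stepDist_rowsum, one_mul]

lemma geom_partial (hα : 0 < α) (hα1 : α ≤ 1) :
    ∀ K : ℕ, ∑ k ∈ Finset.range K, (1-α)^k ≤ 1/α := by
  intro K
  induction K with
  | zero =>
    simp only [Finset.range_zero, Finset.sum_empty]
    positivity
  | succ K ih =>
    rw [geom_sum_succ]
    have h1α : (0:ℝ) ≤ 1 - α := by linarith
    have := mul_le_mul_of_nonneg_left ih h1α
    have hid : (1-α) * (1/α) + 1 = 1/α := by field_simp; ring
    nlinarith

lemma avoid_partial_sum (hα : 0 < α) (hα1 : α ≤ 1)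
    (hB : ∀ v, α ≤ ∑ w ∈ B, M.stepDist m v w) (v : V) :
    ∀ K : ℕ, ∑ n ∈ Finset.range K, M.avoidProb B n v ≤ (m+1) / α := by
  have h1α : (0:ℝ) ≤ 1 - α := by linarith
  have hblock : ∀ K : ℕ, ∑ n ∈ Finset.range (K * (m+1)), (1-α)^(n/(m+1))
      = (m+1) * ∑ k ∈ Finset.range K, (1-α)^k := by
    intro K
    induction K with
    | zero => simp
    | succ K ih =>
      have hle : K * (m+1) ≤ (K+1) * (m+1) := by nlinarith
      rw [Finset.range_eq_Ico, ← Finset.sum_Ico_consecutive _ (Nat.zero_le (K*(m+1))) hle,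
        ← Finset.range_eq_Ico, ih]
      have hconst : ∑ n ∈ Finset.Ico (K*(m+1)) ((K+1)*(m+1)), (1-α)^(n/(m+1))
          = (m+1) * (1-α)^K := by
        have : ∀ n ∈ Finset.Ico (K*(m+1)) ((K+1)*(m+1)), (1-α)^(n/(m+1)) = (1-α)^K := by
          intro n hn
          rw [Finset.mem_Ico] at hn
          congr 1
          exact Nat.div_eq_of_lt_le hn.1 hn.2
        rw [Finset.sum_congr rfl this, Finset.sum_const, Nat.card_Ico]
        rw [show (K+1)*(m+1) - K*(m+1) = m+1 by rw [Nat.add_mul, one_mul]; omega]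
        rw [nsmul_eq_mul]
        push_cast
        ring
      rw [hconst, Finset.sum_range_succ]
      ring
  intro K
  calc ∑ n ∈ Finset.range K, M.avoidProb B n v
      ≤ ∑ n ∈ Finset.range K, (1-α)^(n/(m+1)) := by
        refine Finset.sum_le_sum fun n _ => ?_
        exact M.avoid_le_pow hα hα1 hB (Nat.div_mul_le_self n (m+1)) v
    _ ≤ ∑ n ∈ Finset.range (K * (m+1)), (1-α)^(n/(m+1)) := by
        refine Finset.sum_le_sum_of_subset_of_nonneg ?_ (fun n _ _ => pow_nonneg h1α _)
        exact Finset.range_subset_range.2 (Nat.le_mul_of_pos_right K (Nat.succ_pos m))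
    _ = (m+1) * ∑ k ∈ Finset.range K, (1-α)^k := hblock K
    _ ≤ (m+1) * (1/α) := by
        refine mul_le_mul_of_nonneg_left (geom_partial hα hα1 K) ?_
        positivity
    _ = (m+1)/α := by field_simp

lemma summable_avoid_of (hα : 0 < α) (hα1 : α ≤ 1)
    (hB : ∀ v, α ≤ ∑ w ∈ B, M.stepDist m v w) (v : V) :
    Summable (fun n => M.avoidProb B n v) :=
  summable_of_sum_range_le (fun n => M.avoid_nonneg B n v)
    (M.avoid_partial_sum hα hα1 hB v)

lemma expHit_le_of (hα : 0 < α) (hα1 : α ≤ 1)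
    (hB : ∀ v, α ≤ ∑ w ∈ B, M.stepDist m v w) (v : V) :
    M.expHit v B ≤ (m+1)/α :=
  Real.tsum_le_of_sum_range_le (fun n => M.avoid_nonneg B n v)
    (M.avoid_partial_sum hα hα1 hB v)

end Decay

end MarkovChain
namespace MarkovChain

variable {V : Type} [Fintype V] [DecidableEq V] (M : MarkovChain V)

lemma summable_avoid (hirr : M.Irreducible) (hl : M.Lazy) {B : Finset V}
    (hBne : B.Nonempty) (v : V) : Summable fun n => M.avoidProb B n v := by
  obtain ⟨N, hN⟩ := M.doeblin hirr hl
  have hne : Nonempty V := M.nonempty_V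
  have hune : (Finset.univ : Finset V).Nonempty := Finset.univ_nonempty
  set α := Finset.univ.inf' hune (fun u => ∑ w ∈ B, M.stepDist N u w) with hα
  have hαle : ∀ u, α ≤ ∑ w ∈ B, M.stepDist N u w := fun u =>
    Finset.inf'_le _ (Finset.mem_univ u)
  have hαpos : 0 < α := by
    rw [hα, Finset.lt_inf'_iff]
    intro u _
    obtain ⟨b, hb⟩ := hBne
    exact Finset.sum_pos' (fun w _ => M.stepDist_nonneg N u w) ⟨b, hb, hN u b⟩
  have hα1 : α ≤ 1 := by
    obtain ⟨u⟩ := hne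
    refine le_trans (hαle u) ?_
    rw [← M.stepDist_rowsum N u]
    exact Finset.sum_le_sum_of_subset_of_nonneg (Finset.subset_univ B)
      (fun w _ _ => M.stepDist_nonneg N u w)
  exact M.summable_avoid_of hαpos hα1 hαle v

lemma expHit_le_mix (hirr : M.Irreducible) (hl : M.Lazy) {B : Finset V}
    (hB : 1/2 ≤ M.piSet B) (v : V) :
    M.expHit v B ≤ 4 * ((M.tMix : ℝ) + 1) := by
  have hmix := M.tMix_mem hirr hl
  have hα : ∀ u, (1/4 : ℝ) ≤ ∑ w ∈ B, M.stepDist M.tMix u w := by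
    intro u
    have hbdd : BddAbove (Set.range fun A : Finset V =>
        |∑ w ∈ A, (M.stepDist M.tMix u w - M.pi w)|) :=
      Set.Finite.bddAbove (Set.finite_range _)
    have hb : |∑ w ∈ B, (M.stepDist M.tMix u w - M.pi w)| ≤ M.tvDist M.tMix u :=
      le_ciSup hbdd B
    have h4 : M.tvDist M.tMix u ≤ 1/4 := hmix u
    rw [Finset.sum_sub_distrib, abs_le] at hb
    have hpiB : M.piSet B = ∑ w ∈ B, M.pi w := rfl
    rw [hpiB] at hB
    linarith [hb.1]
  have h := M.expHit_le_of (by norm_num : (0:ℝ) < 1/4) (by norm_num) hα v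
  calc M.expHit v B ≤ ((M.tMix : ℝ)+1)/(1/4) := h
    _ = 4 * ((M.tMix : ℝ) + 1) := by ring

/-- Occupation measure of the chain started at `s` and killed at `B`. -/
def occ (s : V) (B : Finset V) : ℕ → V → ℝ
  | 0, u => if u ∈ B then 0 else if u = s then 1 else 0
  | n+1, u => if u ∈ B then 0 else ∑ w, occ s B n w * M.P w u

lemma occ_nonneg (s : V) (B : Finset V) : ∀ (n : ℕ) (u : V), 0 ≤ M.occ s B n u
  | 0, u => by
      simp only [occ]
      split
      · exact le_refl 0
      · split <;> norm_num
  | n+1, u => by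
      simp only [occ]
      split
      · exact le_refl 0
      · exact Finset.sum_nonneg fun w _ =>
          mul_nonneg (occ_nonneg s B n w) (M.P_nonneg w u)

lemma occ_mem (s : V) (B : Finset V) (n : ℕ) {u : V} (hu : u ∈ B) :
    M.occ s B n u = 0 := by
  cases n <;> simp [occ, hu]

lemma occ_step (s : V) (B : Finset V) (n k : ℕ) :
    ∑ u, M.occ s B (n+1) u * M.avoidProb B k u
      = ∑ w, M.occ s B n w * M.avoidProb B (k+1) w := by
  have hL : ∀ u, M.occ s B (n+1) u * M.avoidProb B k u
      = ∑ w, M.occ s B n w * (M.P w u * M.avoidProb B k u) := by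
    intro u
    by_cases hu : u ∈ B
    · rw [M.avoid_mem B k hu]
      simp [mul_zero]
    · show (if u ∈ B then 0 else ∑ w, M.occ s B n w * M.P w u) * _ = _
      rw [if_neg hu, Finset.sum_mul]
      exact Finset.sum_congr rfl fun w _ => by ring
  have hR : ∀ w, M.occ s B n w * M.avoidProb B (k+1) w
      = ∑ u, M.occ s B n w * (M.P w u * M.avoidProb B k u) := by
    intro w
    by_cases hw : w ∈ B
    · rw [M.occ_mem s B n hw]
      simp [zero_mul]
    · show _ * (if w ∈ B then 0 else ∑ u, M.P w u * M.avoidProb B k u) = _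
      rw [if_neg hw, Finset.mul_sum]
  calc ∑ u, M.occ s B (n+1) u * M.avoidProb B k u
      = ∑ u, ∑ w, M.occ s B n w * (M.P w u * M.avoidProb B k u) :=
        Finset.sum_congr rfl fun u _ => hL u
    _ = ∑ w, ∑ u, M.occ s B n w * (M.P w u * M.avoidProb B k u) := Finset.sum_comm
    _ = ∑ w, M.occ s B n w * M.avoidProb B (k+1) w :=
        Finset.sum_congr rfl fun w _ => (hR w).symm

lemma occ_exchange (s : V) (B : Finset V) :
    ∀ n k, ∑ u, M.occ s B n u * M.avoidProb B k u
      = ∑ u, M.occ s B 0 u * M.avoidProb B (n+k) u := by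
  intro n
  induction n with
  | zero => intro k; simp
  | succ n ih =>
    intro k
    rw [M.occ_step s B n k, ih (k+1)]
    congr 1
    ext u
    congr 2
    omega

lemma occ_total (s : V) (B : Finset V) (hs : s ∉ B) (n : ℕ) :
    ∑ u, M.occ s B n u = M.avoidProb B n s := by
  have h1 : ∑ u, M.occ s B n u = ∑ u, M.occ s B n u * M.avoidProb B 0 u := by
    refine Finset.sum_congr rfl fun u _ => ?_
    by_cases hu : u ∈ B
    · rw [M.occ_mem s B n hu, zero_mul]
    · show _ = _ * (if u ∈ B then (0:ℝ) else 1)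
      rw [if_neg hu, mul_one]
  rw [h1, M.occ_exchange s B n 0]
  rw [Finset.sum_eq_single s]
  · show (if s ∈ B then (0:ℝ) else if s = s then 1 else 0) * _ = _
    rw [if_neg hs, if_pos rfl, one_mul, Nat.add_zero]
  · intro b _ hb
    show (if b ∈ B then (0:ℝ) else if b = s then 1 else 0) * _ = 0
    by_cases hbB : b ∈ B
    · rw [if_pos hbB, zero_mul]
    · rw [if_neg hbB, if_neg hb, zero_mul]
  · intro h; exact absurd (Finset.mem_univ s) h

lemma occ_le_avoid (s : V) (B : Finset V) (hs : s ∉ B) (n : ℕ) (u : V) :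
    M.occ s B n u ≤ M.avoidProb B n s := by
  rw [← M.occ_total s B hs n]
  exact Finset.single_le_sum (fun w _ => M.occ_nonneg s B n w) (Finset.mem_univ u)

lemma summable_occ (hirr : M.Irreducible) (hl : M.Lazy) {s : V} {B : Finset V}
    (hBne : B.Nonempty) (hs : s ∉ B) (u : V) :
    Summable fun n => M.occ s B n u :=
  Summable.of_nonneg_of_le (fun n => M.occ_nonneg s B n u)
    (fun n => M.occ_le_avoid s B hs n u) (M.summable_avoid hirr hl hBne s)

/-- Total occupation (expected number of visits before hitting `B`). -/
noncomputable def yocc (s : V) (B : Finset V) (u : V) : ℝ := ∑' n, M.occ s B n u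

lemma yocc_nonneg (s : V) (B : Finset V) (u : V) : 0 ≤ M.yocc s B u :=
  tsum_nonneg fun n => M.occ_nonneg s B n u

lemma yocc_mem (s : V) (B : Finset V) {u : V} (hu : u ∈ B) : M.yocc s B u = 0 := by
  unfold yocc
  rw [show (fun n => M.occ s B n u) = fun _ => 0 from funext fun n => M.occ_mem s B n hu]
  exact tsum_zero

lemma yocc_total (hirr : M.Irreducible) (hl : M.Lazy) {s : V} {B : Finset V}
    (hBne : B.Nonempty) (hs : s ∉ B) :
    ∑ u, M.yocc s B u = M.expHit s B := by
  unfold yocc expHit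
  rw [← Summable.tsum_finsetSum (fun u _ => M.summable_occ hirr hl hBne hs u)]
  exact tsum_congr fun n => M.occ_total s B hs n

lemma yocc_balance (hirr : M.Irreducible) (hl : M.Lazy) {s : V} {B : Finset V}
    (hBne : B.Nonempty) (hs : s ∉ B) {u : V} (hu : u ∉ B) :
    M.yocc s B u = M.occ s B 0 u + ∑ w, M.yocc s B w * M.P w u := by
  unfold yocc
  rw [Summable.tsum_eq_zero_add (M.summable_occ hirr hl hBne hs u)]
  congr 1
  have h1 : ∀ n : ℕ, M.occ s B (n+1) u = ∑ w, M.occ s B n w * M.P w u := by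
    intro n
    show (if u ∈ B then 0 else ∑ w, M.occ s B n w * M.P w u) = _
    rw [if_neg hu]
  rw [tsum_congr h1]
  rw [Summable.tsum_finsetSum (fun w _ => ((M.summable_occ hirr hl hBne hs w).mul_right (M.P w u)))]
  exact Finset.sum_congr rfl fun w _ => tsum_mul_right

lemma yocc_flow (hirr : M.Irreducible) (hl : M.Lazy) {s : V} {B : Finset V}
    (hBne : B.Nonempty) (hs : s ∉ B) {A : Finset V} (hAB : ∀ x ∈ A, x ∉ B) :
    (∑ x ∈ A, ∑ z ∈ Aᶜ, M.yocc s B x * M.P x z)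
      - (∑ x ∈ A, ∑ z ∈ Aᶜ, M.yocc s B z * M.P z x)
      = ∑ x ∈ A, M.occ s B 0 x := by
  have h1 : ∑ x ∈ A, M.yocc s B x
      = ∑ x ∈ A, M.occ s B 0 x
        + (∑ x ∈ A, ∑ w ∈ A, M.yocc s B w * M.P w x
          + ∑ x ∈ A, ∑ w ∈ Aᶜ, M.yocc s B w * M.P w x) := by
    rw [← Finset.sum_add_distrib, ← Finset.sum_add_distrib]
    refine Finset.sum_congr rfl fun x hx => ?_
    rw [M.yocc_balance hirr hl hBne hs (hAB x hx)]
    congr 1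
    rw [Finset.sum_add_sum_compl]
  have h2 : ∑ x ∈ A, M.yocc s B x
      = ∑ x ∈ A, ∑ z ∈ A, M.yocc s B x * M.P x z
        + ∑ x ∈ A, ∑ z ∈ Aᶜ, M.yocc s B x * M.P x z := by
    rw [← Finset.sum_add_distrib]
    refine Finset.sum_congr rfl fun x _ => ?_
    rw [Finset.sum_add_sum_compl A (fun z => M.yocc s B x * M.P x z),
      ← Finset.mul_sum, M.P_rowsum, mul_one]
  have h3 : ∑ x ∈ A, ∑ w ∈ A, M.yocc s B w * M.P w x
      = ∑ x ∈ A, ∑ z ∈ A, M.yocc s B x * M.P x z := Finset.sum_comm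
  linarith

lemma occ_zero_sum (s : V) (B : Finset V) (hs : s ∉ B) (A : Finset V) :
    ∑ x ∈ A, M.occ s B 0 x = if s ∈ A then (1:ℝ) else 0 := by
  have h : ∀ x, M.occ s B 0 x = if x = s then (1:ℝ) else 0 := by
    intro x
    show (if x ∈ B then 0 else if x = s then (1:ℝ) else 0) = _
    by_cases hx : x ∈ B
    · rw [if_pos hx, if_neg]
      intro h; exact hs (h ▸ hx)
    · rw [if_neg hx]
  rw [Finset.sum_congr rfl fun x _ => h x, Finset.sum_ite_eq' A s (fun _ => (1:ℝ))]

end MarkovChain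
namespace MarkovChain

variable {V : Type} [Fintype V] [DecidableEq V] (M : MarkovChain V)

lemma yocc_edge_flow (hirr : M.Irreducible) (hl : M.Lazy) {s : V} {B : Finset V}
    (hBne : B.Nonempty) (hs : s ∉ B) {A : Finset V} {v w : V}
    (hU : ∀ x ∈ A, ∀ y ∈ Aᶜ, M.graph.Adj x y → x = v ∧ y = w)
    (hv : v ∈ A) (hw : w ∈ Aᶜ) (hAB : ∀ x ∈ A, x ∉ B) :
    M.yocc s B v * M.P v w - M.yocc s B w * M.P w v
      = (if s ∈ A then (1:ℝ) else 0) := by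
  have h := M.yocc_flow hirr hl hBne hs hAB
  rw [M.sum_cross_out (M.yocc s B) hU hv hw, M.sum_cross_in (M.yocc s B) hU hv hw,
    M.occ_zero_sum s B hs A] at h
  exact h

/-- **Core lower bound**: a nested family of connected cuts gives a lower bound
on the expected hitting time of the complement of the largest set. -/
lemma core (hirr : M.Irreducible) (hl : M.Lazy) (htree : M.graph.IsTree)
    {k : ℕ} (hk : 1 ≤ k) {A : ℕ → Finset V} {s : V}
    (hconn : ∀ j, 1 ≤ j → j ≤ k → M.Conn (A j) ∧ M.Conn (A j)ᶜ)
    (hstrict : ∀ j, 1 ≤ j → j < k → A j ⊂ A (j+1))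
    (hAk : (A k)ᶜ.Nonempty)
    (hs : s ∈ A 1) :
    ∑ j ∈ Finset.Icc 1 k, M.piSet (A j) / M.Q (A j) (A j)ᶜ ≤ M.expHit s (A k)ᶜ := by
  classical
  -- monotonicity
  have hmono : ∀ i j, 1 ≤ i → i ≤ j → j ≤ k → A i ⊆ A j := by
    intro i j hi hij hjk
    induction j, hij using Nat.le_induction with
    | base => exact subset_rfl
    | succ j hij ih =>
      exact subset_trans (ih (by omega)) (hstrict j (by omega) (by omega)).1
  have hlt : ∀ i j, 1 ≤ i → i < j → j ≤ k → A i ⊂ A j := by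
    intro i j hi hij hjk
    have h1 := hstrict i hi (by omega)
    have h2 := hmono (i+1) j (by omega) (by omega) hjk
    exact lt_of_lt_of_le (Finset.lt_iff_ssubset.2 h1) (Finset.le_iff_subset.2 h2)
  have hinj : ∀ i j, 1 ≤ i → i ≤ k → 1 ≤ j → j ≤ k → A i = A j → i = j := by
    intro i j hi hik hj hjk heq
    by_contra hne
    rcases Nat.lt_or_ge i j with h | h
    · exact (hlt i j hi h hjk).ne heq
    · exact (hlt j i hj (by omega) hik).ne heq.symm
  set B := (A k)ᶜ with hBdef
  have hsk : s ∈ A k := hmono 1 k le_rfl hk le_rfl hs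
  have hsB : s ∉ B := by rw [hBdef, Finset.mem_compl]; exact fun h => h hsk
  have hBne : B.Nonempty := hAk
  have hAjne : ∀ j, 1 ≤ j → j ≤ k → (A j).Nonempty := fun j hj hjk =>
    ⟨s, hmono 1 j le_rfl hj hjk hs⟩
  have hAjcne : ∀ j, 1 ≤ j → j ≤ k → (A j)ᶜ.Nonempty := by
    intro j hj hjk
    obtain ⟨t, ht⟩ := hAk
    rw [Finset.mem_compl] at ht
    exact ⟨t, Finset.mem_compl.2 fun h => ht (hmono j k hj hjk le_rfl h)⟩
  -- cut vertices
  have hcut : ∀ j : ℕ, ∃ p : V × V, (1 ≤ j → j ≤ k →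
      p.1 ∈ A j ∧ p.2 ∉ A j ∧ M.graph.Adj p.1 p.2) := by
    intro j
    by_cases h : 1 ≤ j ∧ j ≤ k
    · obtain ⟨b, a, hb, ha, hadj⟩ := M.cut_exists htree (hAjne j h.1 h.2) (hAjcne j h.1 h.2)
      exact ⟨(b, a), fun _ _ => ⟨hb, ha, hadj⟩⟩
    · exact ⟨(s, s), fun h1 h2 => absurd ⟨h1, h2⟩ h⟩
  choose cut hcutspec using hcut
  set b : ℕ → V := fun j => (cut j).1 with hbdef
  set a : ℕ → V := fun j => (cut j).2 with hadef
  have hbmem : ∀ j, 1 ≤ j → j ≤ k → b j ∈ A j := fun j h1 h2 => (hcutspec j h1 h2).1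
  have hamem : ∀ j, 1 ≤ j → j ≤ k → a j ∉ A j := fun j h1 h2 => (hcutspec j h1 h2).2.1
  have hadj : ∀ j, 1 ≤ j → j ≤ k → M.graph.Adj (b j) (a j) := fun j h1 h2 =>
    (hcutspec j h1 h2).2.2
  have hUj : ∀ j, 1 ≤ j → j ≤ k → ∀ x ∈ A j, ∀ y ∈ (A j)ᶜ,
      M.graph.Adj x y → x = b j ∧ y = a j := by
    intro j h1 h2 x hx y hy hxy
    exact cut_unique htree (hconn j h1 h2).1 (hconn j h1 h2).2 (hbmem j h1 h2)
      (hamem j h1 h2) (hadj j h1 h2) hx (Finset.mem_compl.1 hy) hxy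
  have hq : ∀ j, 1 ≤ j → j ≤ k →
      M.Q (A j) (A j)ᶜ = M.pi (b j) * M.P (b j) (a j) := by
    intro j h1 h2
    exact M.Q_eval (hUj j h1 h2) (hbmem j h1 h2)
      (Finset.mem_compl.2 (hamem j h1 h2))
  have hqpos : ∀ j, 1 ≤ j → j ≤ k → 0 < M.Q (A j) (A j)ᶜ := fun j h1 h2 =>
    M.Q_pos hirr (hAjne j h1 h2) (hAjcne j h1 h2)
  have hsidej : ∀ j, 1 ≤ j → j ≤ k → M.side (b j) (a j) = A j := fun j h1 h2 =>
    side_eq htree (hconn j h1 h2).1 (hconn j h1 h2).2 (hbmem j h1 h2)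
      (hamem j h1 h2) (hadj j h1 h2)
  have haknotj : ∀ j, 1 ≤ j → j ≤ k → a k ∉ A j := by
    intro j h1 h2 hmem
    exact hamem k hk le_rfl (hmono j k h1 h2 le_rfl hmem)
  have hakB : a k ∈ B := Finset.mem_compl.2 (hamem k hk le_rfl)
  -- the path induction
  have PIND : ∀ (x t : V) (p : M.graph.Walk x t), t = a k → p.IsPath →
      (∀ z ∈ p.support, z ∈ A k ∨ z = a k) →
      M.pi x * ∑ j ∈ (Finset.Icc 1 k).filter (fun j => x ∈ A j),
          (M.Q (A j) (A j)ᶜ)⁻¹ ≤ M.yocc s B x := by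
    intro x t p
    induction p with
    | nil =>
      intro ht _ _
      subst ht
      have hWempty : (Finset.Icc 1 k).filter (fun j => a k ∈ A j) = ∅ := by
        refine Finset.filter_eq_empty_iff.2 fun j hj => ?_
        rw [Finset.mem_Icc] at hj
        exact haknotj j hj.1 hj.2
      rw [hWempty, Finset.sum_empty, mul_zero]
      exact M.yocc_nonneg s B _
    | @cons u c t hxz q ih =>
      intro ht hpath hsup
      subst ht
      rw [SimpleGraph.Walk.cons_isPath_iff] at hpath
      have hu : u ∈ A k := by
        rcases hsup u (SimpleGraph.Walk.start_mem_support _) with h | h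
        · exact h
        · exfalso
          subst h
          exact hpath.2 (SimpleGraph.Walk.end_mem_support q)
      -- the side of the edge (u, c)
      set A' := M.side u c with hA'def
      have huA' : u ∈ A' := M.self_mem_side u c
      have hcA' : c ∉ A' := not_mem_side htree hxz
      have hU' : ∀ x ∈ A', ∀ y ∈ A'ᶜ, M.graph.Adj x y → x = u ∧ y = c := by
        intro x hx y hy hxy
        exact side_crossing htree hxz hx (Finset.mem_compl.1 hy) hxy
      have hqedges : ∀ e ∈ q.edges, e ∉ ({s(u,c)} : Set (Sym2 V)) := by
        intro e he hmem
        rw [Set.mem_singleton_iff] at hmem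
        subst hmem
        exact hpath.2 (q.fst_mem_support_of_mem_edges he)
      have hreach_c_ak : (M.graph.deleteEdges {s(u,c)}).Reachable c (a k) :=
        ⟨q.toDeleteEdges {s(u,c)} hqedges⟩
      have hakA' : a k ∉ A' := by
        intro hmem
        exact hcA' (M.mem_side.2 (hreach_c_ak.trans (M.mem_side.1 hmem)))
      have hdisj : ∀ x ∈ A', x ∉ B := by
        intro x hx hxB
        obtain ⟨px, hpx⟩ := (hconn k hk le_rfl).2 x (Finset.mem_coe.2 hxB)
          (a k) (Finset.mem_coe.2 hakB)
        obtain ⟨c', d', hc'd', hc', hd', hc's, -⟩ :=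
          walk_cross_set (A := (↑A' : Set V)) px (by simpa using hx)
            (by simpa using hakA')
        have := side_crossing htree hxz (by simpa using hc') (by simpa using hd') hc'd'
        have hc'Ak : c' ∈ (↑(A k)ᶜ : Set V) := hpx c' hc's
        rw [this.1] at hc'Ak
        simp at hc'Ak
        exact hc'Ak hu
      have hflow := M.yocc_edge_flow hirr hl hBne hsB hU' huA'
        (Finset.mem_compl.2 hcA') hdisj
      have hrev : M.pi u * M.P u c = M.pi c * M.P c u := M.reversible hirr htree u c
      have hPpos : 0 < M.P u c := M.adj_pos hirr htree hxz
      have hqEpos : 0 < M.pi u * M.P u c := mul_pos (M.pi_pos u) hPpos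
      -- induction hypothesis for c
      have ihc := ih rfl hpath.1 (fun z hz => hsup z
        (by rw [SimpleGraph.Walk.support_cons]; exact List.mem_cons_of_mem _ hz))
      set Wu := (Finset.Icc 1 k).filter (fun j => u ∈ A j) with hWu
      set Wc := (Finset.Icc 1 k).filter (fun j => c ∈ A j) with hWc
      set ε : ℝ := if s ∈ A' then 1 else 0 with hε
      have hεnn : 0 ≤ ε := by rw [hε]; split <;> norm_num
      have hQinv_nn : ∀ j ∈ Finset.Icc 1 k, 0 ≤ (M.Q (A j) (A j)ᶜ)⁻¹ := by
        intro j hj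
        rw [Finset.mem_Icc] at hj
        exact inv_nonneg.2 (le_of_lt (hqpos j hj.1 hj.2))
      have hdiff : ∑ j ∈ Wu \ Wc, (M.Q (A j) (A j)ᶜ)⁻¹ ≤ ε / (M.pi u * M.P u c) := by
        rcases Finset.eq_empty_or_nonempty (Wu \ Wc) with hemp | ⟨j₀, hj₀⟩
        · rw [hemp, Finset.sum_empty]
          positivity
        · have hj₀' := hj₀
          rw [Finset.mem_sdiff, hWu, Finset.mem_filter, Finset.mem_Icc] at hj₀'
          obtain ⟨⟨⟨hj₀1, hj₀k⟩, huj₀⟩, hj₀nc⟩ := hj₀'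
          have hcj₀ : c ∉ A j₀ := by
            intro h
            exact hj₀nc (by rw [hWc, Finset.mem_filter, Finset.mem_Icc]; exact ⟨⟨hj₀1, hj₀k⟩, h⟩)
          have hcross := hUj j₀ hj₀1 hj₀k u huj₀ c (Finset.mem_compl.2 hcj₀) hxz
          have hAj₀ : A' = A j₀ := by
            rw [hA'def, hcross.1, hcross.2]
            exact hsidej j₀ hj₀1 hj₀k
          have hsA' : s ∈ A' := by
            rw [hAj₀]
            exact hmono 1 j₀ le_rfl hj₀1 hj₀k hs
          have hε1 : ε = 1 := by rw [hε, if_pos hsA']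
          have hQj₀ : M.Q (A j₀) (A j₀)ᶜ = M.pi u * M.P u c := by
            rw [hq j₀ hj₀1 hj₀k, ← hcross.1, ← hcross.2]
          have hsingle : Wu \ Wc = {j₀} := by
            ext j
            simp only [Finset.mem_singleton]
            constructor
            · intro hj
              have hj' := hj
              rw [Finset.mem_sdiff, hWu, Finset.mem_filter, Finset.mem_Icc] at hj'
              obtain ⟨⟨⟨hj1, hjk⟩, huj⟩, hjnc⟩ := hj'
              have hcj : c ∉ A j := by
                intro h
                exact hjnc (by rw [hWc, Finset.mem_filter, Finset.mem_Icc]; exact ⟨⟨hj1, hjk⟩, h⟩)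
              have hcross' := hUj j hj1 hjk u huj c (Finset.mem_compl.2 hcj) hxz
              have : A' = A j := by
                rw [hA'def, hcross'.1, hcross'.2]
                exact hsidej j hj1 hjk
              exact hinj j j₀ hj1 hjk hj₀1 hj₀k (by rw [← this, hAj₀])
            · intro hj; subst hj; exact hj₀
          rw [hsingle, Finset.sum_singleton, hQj₀, hε1]
          rw [one_div]
      have hsplit : ∑ j ∈ Wu, (M.Q (A j) (A j)ᶜ)⁻¹
          ≤ ∑ j ∈ Wc, (M.Q (A j) (A j)ᶜ)⁻¹ + ε / (M.pi u * M.P u c) := by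
        rw [← Finset.sum_inter_add_sum_sdiff Wu Wc (fun j => (M.Q (A j) (A j)ᶜ)⁻¹)]
        have h1 : ∑ j ∈ Wu ∩ Wc, (M.Q (A j) (A j)ᶜ)⁻¹
            ≤ ∑ j ∈ Wc, (M.Q (A j) (A j)ᶜ)⁻¹ := by
          refine Finset.sum_le_sum_of_subset_of_nonneg Finset.inter_subset_right ?_
          intro j hj _
          refine hQinv_nn j ?_
          rw [hWc, Finset.mem_filter] at hj
          exact hj.1
        linarith [hdiff]
      -- combine
      have hWcnn : 0 ≤ ∑ j ∈ Wc, (M.Q (A j) (A j)ᶜ)⁻¹ := Finset.sum_nonneg fun j hj =>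
        hQinv_nn j (by rw [hWc, Finset.mem_filter] at hj; exact hj.1)
      have hykey : M.pi u * (∑ j ∈ Wu, (M.Q (A j) (A j)ᶜ)⁻¹) * M.P u c
          ≤ M.yocc s B u * M.P u c := by
        have e0 : M.pi u * (∑ j ∈ Wu, (M.Q (A j) (A j)ᶜ)⁻¹) * M.P u c
            ≤ (M.pi u * M.P u c) * (∑ j ∈ Wc, (M.Q (A j) (A j)ᶜ)⁻¹)
              + (M.pi u * M.P u c) * (ε / (M.pi u * M.P u c)) := by
          have := mul_le_mul_of_nonneg_left hsplit (le_of_lt hqEpos)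
          calc M.pi u * (∑ j ∈ Wu, (M.Q (A j) (A j)ᶜ)⁻¹) * M.P u c
              = (M.pi u * M.P u c) * ∑ j ∈ Wu, (M.Q (A j) (A j)ᶜ)⁻¹ := by ring
            _ ≤ (M.pi u * M.P u c) * (∑ j ∈ Wc, (M.Q (A j) (A j)ᶜ)⁻¹
                  + ε / (M.pi u * M.P u c)) := this
            _ = _ := by ring
        have e1 : (M.pi u * M.P u c) * (ε / (M.pi u * M.P u c)) = ε :=
          mul_div_cancel₀ ε (ne_of_gt hqEpos)
        have e2 : (M.pi u * M.P u c) * (∑ j ∈ Wc, (M.Q (A j) (A j)ᶜ)⁻¹)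
            ≤ M.yocc s B c * M.P c u := by
          rw [hrev]
          calc M.pi c * M.P c u * (∑ j ∈ Wc, (M.Q (A j) (A j)ᶜ)⁻¹)
              = (M.pi c * ∑ j ∈ Wc, (M.Q (A j) (A j)ᶜ)⁻¹) * M.P c u := by ring
            _ ≤ M.yocc s B c * M.P c u :=
              mul_le_mul_of_nonneg_right ihc (M.P_nonneg c u)
        have e3 : M.yocc s B c * M.P c u + ε = M.yocc s B u * M.P u c := by
          rw [hε] at *
          linarith [hflow]
        linarith
      exact le_of_mul_le_mul_right hykey hPpos
  -- per-vertex claim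
  have CLM : ∀ v ∈ A k, M.pi v * ∑ j ∈ (Finset.Icc 1 k).filter (fun j => v ∈ A j),
      (M.Q (A j) (A j)ᶜ)⁻¹ ≤ M.yocc s B v := by
    intro v hv
    obtain ⟨p0, hp0⟩ := (hconn k hk le_rfl).1 v (by simpa using hv)
      (b k) (by simpa using hbmem k hk le_rfl)
    set w1 := p0.concat (hadj k hk le_rfl) with hw1
    have hw1sup : ∀ z ∈ w1.support, z ∈ A k ∨ z = a k := by
      intro z hz
      rw [hw1, SimpleGraph.Walk.support_concat] at hz
      rw [List.mem_append, List.mem_singleton] at hz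
      rcases hz with h | h
      · exact Or.inl (by simpa using hp0 z h)
      · exact Or.inr h
    refine PIND v (a k) (w1.toPath : M.graph.Walk v (a k)) rfl (w1.toPath).2 ?_
    intro z hz
    exact hw1sup z (SimpleGraph.Walk.support_toPath_subset w1 hz)
  -- final summation
  have hfinal : ∑ j ∈ Finset.Icc 1 k, M.piSet (A j) / M.Q (A j) (A j)ᶜ
      ≤ ∑ v ∈ A k, M.yocc s B v := by
    have h1 : ∀ j ∈ Finset.Icc 1 k, M.piSet (A j) / M.Q (A j) (A j)ᶜ
        = ∑ v ∈ A k, (if v ∈ A j then M.pi v * (M.Q (A j) (A j)ᶜ)⁻¹ else 0) := by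
      intro j hj
      rw [Finset.mem_Icc] at hj
      rw [Finset.sum_ite_mem, Finset.inter_eq_right.2 (hmono j k hj.1 hj.2 le_rfl)]
      unfold piSet
      rw [div_eq_mul_inv, Finset.sum_mul]
    rw [Finset.sum_congr rfl h1, Finset.sum_comm]
    refine le_trans (le_of_eq ?_) (Finset.sum_le_sum CLM)
    refine Finset.sum_congr rfl fun v hv => ?_
    rw [Finset.sum_filter, Finset.mul_sum]
    refine Finset.sum_congr rfl fun j hj => ?_
    split <;> ring
  calc ∑ j ∈ Finset.Icc 1 k, M.piSet (A j) / M.Q (A j) (A j)ᶜ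
      ≤ ∑ v ∈ A k, M.yocc s B v := hfinal
    _ ≤ ∑ v, M.yocc s B v := Finset.sum_le_sum_of_subset_of_nonneg
        (Finset.subset_univ _) (fun v _ _ => M.yocc_nonneg s B v)
    _ = M.expHit s B := M.yocc_total hirr hl hBne hsB

end MarkovChain
namespace MarkovChain

variable {V : Type} [Fintype V] [DecidableEq V] (M : MarkovChain V)

lemma piSet_compl (A : Finset V) : M.piSet A + M.piSet Aᶜ = 1 := by
  unfold piSet
  rw [Finset.sum_add_sum_compl, M.pi_sum]

lemma piSet_nonneg (A : Finset V) : 0 ≤ M.piSet A :=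
  Finset.sum_nonneg fun v _ => le_of_lt (M.pi_pos v)

lemma piSet_le_one (A : Finset V) : M.piSet A ≤ 1 := by
  have h1 := M.piSet_compl A
  have h2 := M.piSet_nonneg Aᶜ
  linarith

lemma piSet_mono {A B : Finset V} (h : A ⊆ B) : M.piSet A ≤ M.piSet B :=
  Finset.sum_le_sum_of_subset_of_nonneg h (fun v _ _ => le_of_lt (M.pi_pos v))

lemma botsum_le (hirr : M.Irreducible) (hl : M.Lazy) (htree : M.graph.IsTree)
    {l : ℕ} {S : ℕ → Finset V} (hbot : M.IsBottleneckSeq 1 l S) :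
    ∑ j ∈ Finset.Icc 1 l, 1 / M.Phi (S j) ≤ 16 * (M.tMix : ℝ) := by
  classical
  obtain ⟨hl1, hS1ne, hSlne, hmono0, hconn, hbotq⟩ := hbot
  have hSlcne : (S l)ᶜ.Nonempty := by
    by_contra h
    rw [Finset.not_nonempty_iff_eq_empty] at h
    exact hSlne (by
      rw [← compl_compl (S l), h, compl_empty])
  -- monotonicity
  have hmono : ∀ i j, 1 ≤ i → i ≤ j → j ≤ l → S i ⊆ S j := by
    intro i j hi hij hjl
    induction j, hij using Nat.le_induction with
    | base => exact subset_rfl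
    | succ j hij ih =>
      exact subset_trans (ih (by omega)) (hmono0 j (by omega) (by omega))
  have hSjne : ∀ j, 1 ≤ j → j ≤ l → (S j).Nonempty := by
    intro j h1 h2
    obtain ⟨v, hv⟩ := hS1ne
    exact ⟨v, hmono 1 j le_rfl h1 h2 hv⟩
  have hSjcne : ∀ j, 1 ≤ j → j ≤ l → (S j)ᶜ.Nonempty := by
    intro j h1 h2
    obtain ⟨t, ht⟩ := hSlcne
    rw [Finset.mem_compl] at ht
    exact ⟨t, Finset.mem_compl.2 fun h => ht (hmono j l h1 h2 le_rfl h)⟩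
  have hQpos : ∀ j, 1 ≤ j → j ≤ l → 0 < M.Q (S j) (S j)ᶜ := fun j h1 h2 =>
    M.Q_pos hirr (hSjne j h1 h2) (hSjcne j h1 h2)
  -- strictness
  have hstrict : ∀ j, 1 ≤ j → j < l → S j ⊂ S (j+1) := by
    intro j h1 h2
    refine ⟨hmono0 j h1 h2, fun hsub => ?_⟩
    have heq : S (j+1) = S j := le_antisymm hsub (hmono0 j h1 h2)
    have hzero : M.Q (S (j+1) \ S j) (S j) = 0 := by
      rw [heq, Finset.sdiff_self]
      unfold Q
      exact Finset.sum_empty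
    have hb := hbotq j h1 h2
    rw [hzero, one_mul] at hb
    have hpos : 0 < M.Q (S j)ᶜ (S j) := by
      rw [← M.Q_balance]
      exact hQpos j h1 (by omega)
    linarith
  -- mixing time ≥ 1
  obtain ⟨v₀, hv₀⟩ := hS1ne
  obtain ⟨t₀, ht₀'⟩ := hSlcne
  have ht₀ : t₀ ∉ S l := Finset.mem_compl.1 ht₀'
  have hne : v₀ ≠ t₀ := fun h => ht₀ (h ▸ hmono 1 l le_rfl hl1 le_rfl hv₀)
  have htm1 : 1 ≤ M.tMix := M.tMix_pos hirr hl ⟨v₀, t₀, hne⟩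
  have htm1' : (1:ℝ) ≤ (M.tMix : ℝ) := by exact_mod_cast htm1
  -- split point
  have hm : ∃ m, m ≤ l ∧ (∀ i, 1 ≤ i → i ≤ m → M.piSet (S i) ≤ 1/2)
      ∧ (∀ i, m < i → i ≤ l → 1/2 < M.piSet (S i)) := by
    rcases Finset.eq_empty_or_nonempty
        ((Finset.Icc 1 l).filter (fun i => M.piSet (S i) ≤ 1/2)) with hFe | hFne
    · refine ⟨0, Nat.zero_le l, fun i h1 h2 => absurd (le_trans h1 h2) (by omega), ?_⟩
      intro i h0 hil
      by_contra hle
      push_neg at hle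
      have hiF : i ∈ (Finset.Icc 1 l).filter (fun i => M.piSet (S i) ≤ 1/2) := by
        rw [Finset.mem_filter, Finset.mem_Icc]
        exact ⟨⟨by omega, hil⟩, hle⟩
      rw [hFe] at hiF
      simp at hiF
    · obtain ⟨m₀, hm₀F, hm₀max⟩ : ∃ m₀ ∈ (Finset.Icc 1 l).filter
          (fun i => M.piSet (S i) ≤ 1/2),
          ∀ i ∈ (Finset.Icc 1 l).filter (fun i => M.piSet (S i) ≤ 1/2), i ≤ m₀ :=
        ⟨_, Finset.max'_mem _ hFne, fun i hi => Finset.le_max' _ i hi⟩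
      rw [Finset.mem_filter, Finset.mem_Icc] at hm₀F
      refine ⟨m₀, hm₀F.1.2, ?_, ?_⟩
      · intro i h1 him
        have hsub := hmono i m₀ h1 him hm₀F.1.2
        have := M.piSet_mono hsub
        linarith [hm₀F.2]
      · intro i hmi hil
        by_contra hle
        push_neg at hle
        have hiF : i ∈ (Finset.Icc 1 l).filter (fun i => M.piSet (S i) ≤ 1/2) := by
          rw [Finset.mem_filter, Finset.mem_Icc]
          exact ⟨⟨by omega, hil⟩, hle⟩
        have := hm₀max i hiF
        omega
  obtain ⟨m, hml, hsmall, hbig⟩ := hm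
  -- Part 1
  have hP1 : ∑ j ∈ Finset.Icc 1 m, M.piSet (S j) / M.Q (S j) (S j)ᶜ
      ≤ 4 * ((M.tMix : ℝ) + 1) := by
    rcases Nat.eq_zero_or_pos m with hm0 | hm1
    · subst hm0
      rw [Finset.Icc_eq_empty (by omega), Finset.sum_empty]
      positivity
    · have hcore := M.core hirr hl htree hm1 (A := S) (s := v₀)
        (fun j h1 h2 => hconn j h1 (le_trans h2 hml))
        (fun j h1 h2 => hstrict j h1 (by omega))
        (hSjcne m hm1 hml) hv₀
      refine le_trans hcore ?_
      refine le_trans (M.expHit_le_mix hirr hl ?_ v₀) le_rfl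
      have h1 := M.piSet_compl (S m)
      have h2 := hsmall m hm1 le_rfl
      linarith
  -- Part 2
  have hP2 : ∑ i ∈ Finset.Icc (m+1) l, M.piSet (S i)ᶜ / M.Q (S i) (S i)ᶜ
      ≤ 4 * ((M.tMix : ℝ) + 1) := by
    rcases Nat.lt_or_ge m l with hml' | hlm
    · -- m < l
      have hk1 : 1 ≤ l-m := by omega
      have hcc : ∀ {X Y : Finset V}, X ⊂ Y → Yᶜ ⊂ Xᶜ := by
        intro X Y h
        exact ⟨Finset.compl_subset_compl.2 h.1,
          fun hsub => h.2 (Finset.compl_subset_compl.1 hsub)⟩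
      have hconn' : ∀ j, 1 ≤ j → j ≤ (l-m) → M.Conn ((S (l+1-j))ᶜ) ∧ M.Conn ((S (l+1-j))ᶜ)ᶜ := by
        intro j h1 h2
        have hi1 : 1 ≤ l+1-j := by omega
        have hi2 : l+1-j ≤ l := by omega
        constructor
        · exact (hconn (l+1-j) hi1 hi2).2
        · rw [compl_compl]
          exact (hconn (l+1-j) hi1 hi2).1
      have hstrict' : ∀ j, 1 ≤ j → j < (l-m) → (S (l+1-j))ᶜ ⊂ (S (l+1-(j+1)))ᶜ := by
        intro j h1 h2
        have heq : l+1-(j+1) = l-j := by omega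
        rw [heq]
        refine hcc ?_
        have heq2 : l+1-j = (l-j)+1 := by omega
        rw [heq2]
        exact hstrict (l-j) (by omega) (by omega)
      have hAk' : ((S (l+1-(l-m)))ᶜ)ᶜ.Nonempty := by
        have heq : l+1-(l-m) = m+1 := by omega
        rw [heq, compl_compl]
        exact hSjne (m+1) (by omega) (by omega)
      have hs' : t₀ ∈ (S (l+1-1))ᶜ := by
        have heq : l+1-1 = l := by omega
        rw [heq]
        exact ht₀'
      have hcore := M.core hirr hl htree hk1 (A := fun j => (S (l+1-j))ᶜ) (s := t₀)
        hconn' hstrict' hAk' hs'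
      -- rewrite the conclusion
      beta_reduce at hcore
      have heqk : l+1-(l-m) = m+1 := by omega
      rw [heqk, compl_compl] at hcore
      have hrw : ∑ j ∈ Finset.Icc 1 (l-m), M.piSet (S (l+1-j))ᶜ / M.Q (S (l+1-j))ᶜ ((S (l+1-j))ᶜ)ᶜ
          = ∑ i ∈ Finset.Icc (m+1) l, M.piSet (S i)ᶜ / M.Q (S i) (S i)ᶜ := by
        refine Finset.sum_nbij' (i := fun j => l+1-j) (j := fun i => l+1-i) ?_ ?_ ?_ ?_ ?_
        · intro x hx; simp only [Finset.mem_Icc] at hx ⊢; omega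
        · intro x hx; simp only [Finset.mem_Icc] at hx ⊢; omega
        · intro x hx; simp only [Finset.mem_Icc] at hx; omega
        · intro x hx; simp only [Finset.mem_Icc] at hx; omega
        · intro x hx
          rw [compl_compl, M.Q_balance]
      rw [hrw] at hcore
      refine le_trans hcore ?_
      refine M.expHit_le_mix hirr hl ?_ t₀
      have := hbig (m+1) (by omega) (by omega)
      linarith
    · -- m ≥ l : empty sum
      have : Finset.Icc (m+1) l = ∅ := by
        rw [Finset.Icc_eq_empty_iff]
        omega
      rw [this, Finset.sum_empty]
      positivity
  -- combine
  have e1 : Finset.Icc 1 l = Finset.Ioc 0 l := by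
    ext x; simp only [Finset.mem_Icc, Finset.mem_Ioc]; omega
  have e2 : Finset.Icc 1 m = Finset.Ioc 0 m := by
    ext x; simp only [Finset.mem_Icc, Finset.mem_Ioc]; omega
  have e3 : Finset.Icc (m+1) l = Finset.Ioc m l := by
    ext x; simp only [Finset.mem_Icc, Finset.mem_Ioc]; omega
  have hsplit : ∑ j ∈ Finset.Icc 1 l, 1 / M.Phi (S j)
      = ∑ j ∈ Finset.Icc 1 m, 1 / M.Phi (S j)
        + ∑ j ∈ Finset.Icc (m+1) l, 1 / M.Phi (S j) := by
    rw [e1, e2, e3]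
    exact (Finset.sum_Ioc_consecutive _ (Nat.zero_le m) hml).symm
  have hPhi : ∀ j, 1 ≤ j → j ≤ l →
      1 / M.Phi (S j) = M.piSet (S j) * M.piSet (S j)ᶜ / M.Q (S j) (S j)ᶜ := by
    intro j h1 h2
    unfold Phi
    rw [one_div_div]
  have ht1 : ∑ j ∈ Finset.Icc 1 m, 1 / M.Phi (S j)
      ≤ ∑ j ∈ Finset.Icc 1 m, M.piSet (S j) / M.Q (S j) (S j)ᶜ := by
    refine Finset.sum_le_sum fun j hj => ?_
    rw [Finset.mem_Icc] at hj
    have hjl : j ≤ l := le_trans hj.2 hml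
    rw [hPhi j hj.1 hjl]
    rw [div_le_div_iff_of_pos_right (hQpos j hj.1 hjl)]
    exact mul_le_of_le_one_right (M.piSet_nonneg _) (M.piSet_le_one _)
  have ht2 : ∑ j ∈ Finset.Icc (m+1) l, 1 / M.Phi (S j)
      ≤ ∑ j ∈ Finset.Icc (m+1) l, M.piSet (S j)ᶜ / M.Q (S j) (S j)ᶜ := by
    refine Finset.sum_le_sum fun j hj => ?_
    rw [Finset.mem_Icc] at hj
    have hj1 : 1 ≤ j := by omega
    rw [hPhi j hj1 hj.2]
    rw [div_le_div_iff_of_pos_right (hQpos j hj1 hj.2)]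
    exact mul_le_of_le_one_left (M.piSet_nonneg _) (M.piSet_le_one _)
  calc ∑ j ∈ Finset.Icc 1 l, 1 / M.Phi (S j)
      = ∑ j ∈ Finset.Icc 1 m, 1 / M.Phi (S j)
        + ∑ j ∈ Finset.Icc (m+1) l, 1 / M.Phi (S j) := hsplit
    _ ≤ 4 * ((M.tMix : ℝ) + 1) + 4 * ((M.tMix : ℝ) + 1) := by
        have := le_trans ht1 hP1
        have := le_trans ht2 hP2
        linarith
    _ ≤ 16 * (M.tMix : ℝ) := by linarith

end MarkovChain
/-- **Proposition 3.1.** If `X` is an irreducible lazy Markov chain on a tree, then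
`t_mix(X) ≳ max_{(S_1,…,S_l) ∈ 𝒮_1(X)} ∑_i 1/Φ(S_i)` for a universal constant. -/
theorem tree_lower_bound :
    ∃ c : ℝ, 0 < c ∧
      ∀ (V : Type) [Fintype V] [DecidableEq V] (X : MarkovChain V),
        X.Irreducible → X.Lazy → X.graph.IsTree →
        c * X.maxBotSum 1 ≤ (X.tMix : ℝ) := by
  refine ⟨1/16, by norm_num, ?_⟩
  intro V _ _ X hirr hl htree
  have hub : X.maxBotSum 1 ≤ 16 * (X.tMix : ℝ) := by
    rw [MarkovChain.maxBotSum]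
    refine Real.sSup_le ?_ (by positivity)
    rintro x ⟨l, S, hbot, rfl⟩
    exact X.botsum_le hirr hl htree hbot
  have h0 : (0:ℝ) ≤ (X.tMix : ℝ) := Nat.cast_nonneg _
  linarith
end
end

section
/- Let X be an irreducible lazy Markov chain on a finite state space V with stationary distribution π, let s∈V, let τ be a stopping rule from s to π, and let y_v be the scaled exit frequencies of τ. Then for every Z⊂V with s∉Z, π(Z) = Σ_{u∉Z, v∈Z} (y_u Q(u,v) − y_v Q(v,u)). -/
open Finset

noncomputable section

/-- **Lemma 4.2.** If `x` are the exit frequencies of a stopping rule from `s` to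
`π`, with scaled exit frequencies `y v = x v / π v`, then for every `Z ⊆ V` with
`s ∉ Z`, `π(Z) = ∑_{u ∉ Z, v ∈ Z} (y_u Q(u,v) - y_v Q(v,u))`. -/
theorem exit_frequency_identity {V : Type} [Fintype V] [DecidableEq V]
    (X : MarkovChain V) (hirr : X.Irreducible) (hlazy : X.Lazy)
    (s : V) (x : V → ℝ) (hx : X.IsExitMeasure s x)
    (Z : Finset V) (hsZ : s ∉ Z) :
    X.piSet Z = ∑ u ∈ Zᶜ, ∑ v ∈ Z,
      ((x u / X.pi u) * (X.pi u * X.P u v) - (x v / X.pi v) * (X.pi v * X.P v u)) := by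
  obtain ⟨hx0, hbal⟩ := hx
  have key : ∀ u v, (x u / X.pi u) * (X.pi u * X.P u v) = x u * X.P u v := by
    intro u v
    have := (X.pi_pos u).ne'
    field_simp
  simp_rw [key]
  have h1 : ∑ v ∈ Z, (X.pi v + x v) = ∑ v ∈ Z, ∑ u, x u * X.P u v := by
    refine Finset.sum_congr rfl fun v hv => ?_
    have h := hbal v
    rw [if_neg (by rintro rfl; exact hsZ hv)] at h
    linarith
  have h2 : ∀ v, ∑ u, x u * X.P u v = ∑ u ∈ Z, x u * X.P u v + ∑ u ∈ Zᶜ, x u * X.P u v :=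
    fun v => (Finset.sum_add_sum_compl Z _).symm
  have h3 : ∑ v ∈ Z, x v = ∑ v ∈ Z, (∑ u ∈ Z, x v * X.P v u + ∑ u ∈ Zᶜ, x v * X.P v u) := by
    refine Finset.sum_congr rfl fun v _ => ?_
    rw [Finset.sum_add_sum_compl Z, ← Finset.mul_sum, X.P_rowsum, mul_one]
  simp_rw [h2] at h1
  rw [Finset.sum_add_distrib] at h1 h3
  rw [Finset.sum_add_distrib] at h1
  have swap1 : ∑ v ∈ Z, ∑ u ∈ Z, x u * X.P u v = ∑ v ∈ Z, ∑ u ∈ Z, x v * X.P v u :=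
    Finset.sum_comm
  have swap2 : ∑ u ∈ Zᶜ, ∑ v ∈ Z, x v * X.P v u = ∑ v ∈ Z, ∑ u ∈ Zᶜ, x v * X.P v u :=
    Finset.sum_comm
  have swap3 : ∑ u ∈ Zᶜ, ∑ v ∈ Z, x u * X.P u v = ∑ v ∈ Z, ∑ u ∈ Zᶜ, x u * X.P u v :=
    Finset.sum_comm
  simp_rw [Finset.sum_sub_distrib]
  rw [swap2, swap3]
  unfold MarkovChain.piSet
  linarith [swap1]
end
end

section
/- Let G be a finite connected graph, T a finite tree, and 𝒞⊂V(T)×V(G) a correspondence with stretch at most r, and for t∈V(T) let A_t = B_G(r(r+1), 𝒞_{t,G}). Then for all t∈V(T), the set A_t induces a connected subgraph of G; moreover, for all u,v∈A_t there is a path from u to v contained within A_t of length at most 2r(r+1)+(r−1). -/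
open Finset

noncomputable section

/-- **Lemma 5.2.** Let `𝒞 ⊆ V(T) × V(G)` be a correspondence of stretch at most
`r` between a finite tree `T` and a finite connected graph `G`, and let
`A_t = B_G(r(r+1), 𝒞_{t,G})`. Then each `A_t` induces a connected subgraph of `G`;
moreover any `u, v ∈ A_t` are joined by a path within `A_t` of length at most
`2r(r+1) + (r-1)`. -/
theorem ball_of_correspondence_connected (VG VT : Type) [Fintype VG] [Fintype VT]
    (G : SimpleGraph VG) (T : SimpleGraph VT) (hG : G.Connected) (hT : T.IsTree)
    (r : ℝ) (𝒞 : Set (VT × VG)) (h𝒞 : CorrespondenceStretchLE T G r 𝒞)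
    (t : VT) (At : Set VG)
    (hAt : At = {v | ∃ u, (t, u) ∈ 𝒞 ∧ (G.dist v u : ℝ) ≤ r * (r + 1)}) :
    ConnIn G At ∧
      ∀ u ∈ At, ∀ v ∈ At, ∃ p : G.Walk u v,
        (∀ w ∈ p.support, w ∈ At) ∧ (p.length : ℝ) ≤ 2 * (r * (r + 1)) + (r - 1) := by
  classical
  have hr : (1:ℝ) ≤ r := by
    obtain ⟨w₀, hw₀⟩ := h𝒞.1 t
    have h := h𝒞.2.2 _ hw₀ _ hw₀
    simp [SimpleGraph.dist_self] at h
    linarith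
  have key : ∀ u ∈ At, ∀ v ∈ At, ∃ p : G.Walk u v,
      (∀ w ∈ p.support, w ∈ At) ∧ (p.length : ℝ) ≤ 2 * (r * (r + 1)) + (r - 1) := by
    intro u hu v hv
    rw [hAt] at hu hv
    obtain ⟨u', hu', hdu⟩ := hu
    obtain ⟨v', hv', hdv⟩ := hv
    have hdv' : (G.dist v' v : ℝ) ≤ r * (r + 1) := by
      rwa [SimpleGraph.dist_comm]
    have hd' : (G.dist u' v' : ℝ) ≤ r - 1 := by
      have h := h𝒞.2.2 _ hu' _ hv'
      simp [SimpleGraph.dist_self] at h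
      linarith
    obtain ⟨p1, hp1⟩ := hG.exists_walk_length_eq_dist u u'
    obtain ⟨p2, hp2⟩ := hG.exists_walk_length_eq_dist u' v'
    obtain ⟨p3, hp3⟩ := hG.exists_walk_length_eq_dist v' v
    refine ⟨p1.append (p2.append p3), ?_, ?_⟩
    · intro w hw
      rw [SimpleGraph.Walk.mem_support_append_iff] at hw
      rw [hAt]
      rcases hw with hw | hw
      · refine ⟨u', hu', ?_⟩
        have h1 : G.dist w u' ≤ (p1.dropUntil w hw).length :=
          SimpleGraph.dist_le _
        have h2 := SimpleGraph.Walk.length_dropUntil_le p1 hw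
        have : (G.dist w u' : ℝ) ≤ (G.dist u u' : ℝ) := by
          rw [← hp1]; exact_mod_cast le_trans h1 h2
        linarith
      · rw [SimpleGraph.Walk.mem_support_append_iff] at hw
        refine ⟨v', hv', ?_⟩
        rcases hw with hw | hw
        · have h1 : G.dist w v' ≤ (p2.dropUntil w hw).length :=
            SimpleGraph.dist_le _
          have h2 := SimpleGraph.Walk.length_dropUntil_le p2 hw
          have h3 : (G.dist w v' : ℝ) ≤ (G.dist u' v' : ℝ) := by
            rw [← hp2]; exact_mod_cast le_trans h1 h2
          nlinarith
        · have h1 : G.dist v' w ≤ (p3.takeUntil w hw).length :=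
            SimpleGraph.dist_le _
          have h2 := SimpleGraph.Walk.length_takeUntil_le p3 hw
          have h3 : (G.dist w v' : ℝ) ≤ (G.dist v' v : ℝ) := by
            rw [← hp3, SimpleGraph.dist_comm]; exact_mod_cast le_trans h1 h2
          linarith
    · have hl : (p1.append (p2.append p3)).length = p1.length + (p2.length + p3.length) := by
        simp [SimpleGraph.Walk.length_append]
      rw [hl, hp1, hp2, hp3]
      push_cast
      linarith
  refine ⟨?_, key⟩
  intro u hu v hv
  obtain ⟨p, hp, -⟩ := key u hu v hv
  exact ⟨p, hp⟩
end
end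

section
/- Let G be a finite connected graph, T a finite tree, and 𝒞⊂V(T)×V(G) a correspondence with stretch at most r, and for t∈V(T) let A_t = B_G(r(r+1), 𝒞_{t,G}). Then for all distinct a,b,t∈V(T), if t lies on the unique path in T from a to b, then every path in G from 𝒞_{a,G} to 𝒞_{b,G} contains a vertex of A_t. -/
open Finset

noncomputable section

open SimpleGraph in
private lemma cut_mem_path_aux {V : Type} [DecidableEq V] {T : SimpleGraph V} {b t w w' : V}
    (hw : ∀ p : T.Walk w b, p.IsPath → t ∈ p.support)
    (p' : T.Walk w' b) (ht' : t ∉ p'.support)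
    (p : T.Walk w w') : t ∈ p.support := by
  by_contra ht
  have h1 := hw (p.append p').bypass ((p.append p').bypass_isPath)
  have h2 := Walk.support_bypass_subset _ h1
  rw [Walk.mem_support_append_iff] at h2
  tauto

open SimpleGraph in
private lemma cut_dist_split_aux {V : Type} [DecidableEq V] {T : SimpleGraph V} (hc : T.Connected)
    {b t w w' : V}
    (hw : ∀ p : T.Walk w b, p.IsPath → t ∈ p.support)
    (hw' : ¬ ∀ p : T.Walk w' b, p.IsPath → t ∈ p.support) :
    T.dist w t + T.dist t w' ≤ T.dist w w' := by
  push_neg at hw'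
  obtain ⟨p', _, ht'⟩ := hw'
  obtain ⟨p, _, hlen⟩ := hc.exists_path_of_dist w w'
  have ht : t ∈ p.support := cut_mem_path_aux hw p' ht' p
  calc T.dist w t + T.dist t w'
      ≤ (p.takeUntil t ht).length + (p.dropUntil t ht).length :=
        add_le_add (SimpleGraph.dist_le _) (SimpleGraph.dist_le _)
    _ = p.length := by rw [← Walk.length_append, Walk.take_spec]
    _ = T.dist w w' := hlen

/-- **Lemma 5.3.** Let `𝒞 ⊆ V(T) × V(G)` be a correspondence of stretch at most
`r` between a finite tree `T` and a finite connected graph `G`, and let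
`A_t = B_G(r(r+1), 𝒞_{t,G})`. If `a, b, t` are distinct vertices of `T` and `t`
lies on the unique path in `T` from `a` to `b`, then every path in `G` from
`𝒞_{a,G}` to `𝒞_{b,G}` contains a vertex of `A_t`. -/
theorem correspondence_cut (VG VT : Type) [Fintype VG] [Fintype VT]
    (G : SimpleGraph VG) (T : SimpleGraph VT) (hG : G.Connected) (hT : T.IsTree)
    (r : ℝ) (𝒞 : Set (VT × VG)) (h𝒞 : CorrespondenceStretchLE T G r 𝒞)
    (a b t : VT) (hab : a ≠ b) (hat : a ≠ t) (hbt : b ≠ t)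
    (hpath : ∀ p : T.Walk a b, p.IsPath → t ∈ p.support)
    (x y : VG) (hx : (a, x) ∈ 𝒞) (hy : (b, y) ∈ 𝒞) (q : G.Walk x y) :
    ∃ z ∈ q.support, z ∈ {v : VG | ∃ u, (t, u) ∈ 𝒞 ∧ (G.dist v u : ℝ) ≤ r * (r + 1)} := by
    classical
  obtain ⟨hfwd, hbwd, hstr⟩ := h𝒞
  have hr1 : (1 : ℝ) ≤ r := by
    have := hstr (a, x) hx (a, x) hx
    simpa [SimpleGraph.dist_self] using this
  have hr0 : (0 : ℝ) ≤ r := by linarith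
  have hzsup : ∀ i, q.getVert i ∈ q.support := by
    intro i
    rcases le_or_gt i q.length with h | h
    · exact SimpleGraph.Walk.mem_support_iff_exists_getVert.mpr ⟨i, rfl, h⟩
    · rw [q.getVert_of_length_le h.le]; exact q.end_mem_support
  have hGstep : ∀ i, (G.dist (q.getVert i) (q.getVert (i + 1)) : ℝ) ≤ 1 := by
    intro i
    rcases lt_or_ge i q.length with h | h
    · have := SimpleGraph.dist_le (SimpleGraph.Walk.cons (q.adj_getVert_succ h)
        SimpleGraph.Walk.nil)
      simp only [SimpleGraph.Walk.length_cons, SimpleGraph.Walk.length_nil] at this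
      exact_mod_cast this
    · rw [q.getVert_of_length_le h, q.getVert_of_length_le (h.trans (Nat.le_succ i))]
      simp [SimpleGraph.dist_self]
  obtain ⟨s, hs0, hsN, hs⟩ : ∃ s : ℕ → VT, s 0 = a ∧ s (q.length + 1) = b ∧
      ∀ i, (s i, q.getVert i) ∈ 𝒞 := by
    refine ⟨fun i => if i = 0 then a else if i = q.length + 1 then b
      else Classical.choose (hbwd (q.getVert i)), by simp, by simp, ?_⟩
    intro i
    by_cases h0 : i = 0
    · subst h0; simpa [q.getVert_zero] using hx
    by_cases hN : i = q.length + 1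
    · subst hN
      simp only [h0, if_false, if_pos rfl]
      rw [q.getVert_of_length_le (Nat.le_succ _)]
      simpa using hy
    · simp only [h0, hN, if_false]
      exact Classical.choose_spec (hbwd (q.getVert i))
  set Φ : VT → Prop := fun w => ∀ p : T.Walk w b, p.IsPath → t ∈ p.support with hΦdef
  have hΦ0 : Φ (s 0) := by rw [hs0]; exact hpath
  have hΦN : ¬ Φ (s (q.length + 1)) := by
    rw [hsN]
    intro h
    have := h SimpleGraph.Walk.nil (by simp)
    simp only [SimpleGraph.Walk.support_nil, List.mem_singleton] at this
    exact hbt this.symm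
  have hex : ∃ i, ¬ Φ (s i) := ⟨q.length + 1, hΦN⟩
  have hpos : 0 < Nat.find hex := by
    rcases Nat.eq_zero_or_pos (Nat.find hex) with h | h
    · exact absurd hΦ0 (h ▸ Nat.find_spec hex)
    · exact h
  obtain ⟨k, hk⟩ : ∃ k, Nat.find hex = k + 1 := ⟨_, (Nat.succ_pred_eq_of_pos hpos).symm⟩
  have hΦk : Φ (s k) := not_not.mp (Nat.find_min hex (by omega))
  have hΦk1 : ¬ Φ (s (k + 1)) := hk ▸ Nat.find_spec hex
  have hsplit : T.dist (s k) t + T.dist t (s (k + 1)) ≤ T.dist (s k) (s (k + 1)) :=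
    cut_dist_split_aux hT.isConnected hΦk hΦk1
  have h1 := hstr (s k, q.getVert k) (hs k) (s (k + 1), q.getVert (k + 1)) (hs (k + 1))
  push_cast at h1
  have e1 : (T.dist (s k) (s (k + 1)) : ℝ) ≤
      max (T.dist (s k) (s (k + 1)) : ℝ) (G.dist (q.getVert k) (q.getVert (k + 1)) : ℝ) :=
    le_max_left _ _
  have e2 : min (T.dist (s k) (s (k + 1)) : ℝ) (G.dist (q.getVert k) (q.getVert (k + 1)) : ℝ)
      ≤ (G.dist (q.getVert k) (q.getVert (k + 1)) : ℝ) := min_le_right _ _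
  have e3 := hGstep k
  have hmul : r * (min (T.dist (s k) (s (k + 1)) : ℝ)
      (G.dist (q.getVert k) (q.getVert (k + 1)) : ℝ) + 1) ≤ r * 2 :=
    mul_le_mul_of_nonneg_left (by linarith) hr0
  have hTstep : (T.dist (s k) (s (k + 1)) : ℝ) + 1 ≤ 2 * r := by linarith
  have key : ∀ j : ℕ, 2 * (T.dist t (s j) : ℝ) + 1 ≤ 2 * r →
      ∃ z ∈ q.support, z ∈ {v : VG | ∃ u, (t, u) ∈ 𝒞 ∧ (G.dist v u : ℝ) ≤ r * (r + 1)} := by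
    intro j hj
    obtain ⟨u, hu⟩ := hfwd t
    have h2 := hstr (t, u) hu (s j, q.getVert j) (hs j)
    push_cast at h2
    refine ⟨q.getVert j, hzsup j, u, hu, ?_⟩
    have a1 : (G.dist u (q.getVert j) : ℝ) ≤
        max (T.dist t (s j) : ℝ) (G.dist u (q.getVert j) : ℝ) := le_max_right _ _
    have a2 : min (T.dist t (s j) : ℝ) (G.dist u (q.getVert j) : ℝ) ≤
        (T.dist t (s j) : ℝ) := min_le_left _ _
    have hmul2 : r * (min (T.dist t (s j) : ℝ) (G.dist u (q.getVert j) : ℝ) + 1) ≤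
        r * ((T.dist t (s j) : ℝ) + 1) := mul_le_mul_of_nonneg_left (by linarith) hr0
    have hmul3 : r * ((T.dist t (s j) : ℝ) + 1) ≤ r * (r + 1 / 2) :=
      mul_le_mul_of_nonneg_left (by linarith) hr0
    have hcomm : G.dist (q.getVert j) u = G.dist u (q.getVert j) := SimpleGraph.dist_comm
    rw [hcomm]
    nlinarith [h2, a1, hmul2, hmul3, hr0, hr1]
  have hsplitR : (T.dist (s k) t : ℝ) + (T.dist t (s (k + 1)) : ℝ) ≤
      (T.dist (s k) (s (k + 1)) : ℝ) := by exact_mod_cast hsplit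
  rcases le_total (T.dist (s k) t) (T.dist t (s (k + 1))) with hc | hc
  · apply key k
    have hcR : (T.dist (s k) t : ℝ) ≤ (T.dist t (s (k + 1)) : ℝ) := by exact_mod_cast hc
    have hcomm : T.dist t (s k) = T.dist (s k) t := SimpleGraph.dist_comm
    rw [hcomm]
    linarith
  · apply key (k + 1)
    have hcR : (T.dist t (s (k + 1)) : ℝ) ≤ (T.dist (s k) t : ℝ) := by exact_mod_cast hc
    linarith
end
end

section
/- Let G be a finite connected graph, T a finite tree, and 𝒞⊂V(T)×V(G) a correspondence with stretch at most r, and for t∈V(T) let A_t = B_G(r(r+1), 𝒞_{t,G}). Then for any s,t∈V(T), if d_T(s,t) ≥ 2r²(r+1)+r then A_s ∩ A_t = ∅. -/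
open Finset

noncomputable section

/-- **Lemma 5.4.** Let `𝒞 ⊆ V(T) × V(G)` be a correspondence of stretch at most
`r` between a finite tree `T` and a finite connected graph `G`, and let
`A_t = B_G(r(r+1), 𝒞_{t,G})`. If `d_T(s,t) ≥ 2r²(r+1) + r` then `A_s ∩ A_t = ∅`. -/
theorem correspondence_balls_disjoint (VG VT : Type) [Fintype VG] [Fintype VT]
    (G : SimpleGraph VG) (T : SimpleGraph VT) (hG : G.Connected) (hT : T.IsTree)
    (r : ℝ) (𝒞 : Set (VT × VG)) (h𝒞 : CorrespondenceStretchLE T G r 𝒞)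
    (s t : VT) (hd : 2 * r ^ 2 * (r + 1) + r ≤ (T.dist s t : ℝ)) :
    {v : VG | ∃ u, (s, u) ∈ 𝒞 ∧ (G.dist v u : ℝ) ≤ r * (r + 1)} ∩
      {v : VG | ∃ u, (t, u) ∈ 𝒞 ∧ (G.dist v u : ℝ) ≤ r * (r + 1)} = ∅ := by
  obtain ⟨hleft, hright, hstr⟩ := h𝒞
  -- first, r ≥ 1
  obtain ⟨w0, hw0⟩ := hleft s
  have hr1 : (1 : ℝ) ≤ r := by
    have := hstr _ hw0 _ hw0
    simp only [SimpleGraph.dist_self, Nat.cast_zero, max_self, min_self, zero_add, mul_one]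
      at this
    linarith
  ext v
  simp only [Set.mem_inter_iff, Set.mem_setOf_eq, Set.mem_empty_iff_false, iff_false, not_and]
  rintro ⟨u₁, hu₁, hd₁⟩ ⟨u₂, hu₂, hd₂⟩
  have htri : (G.dist u₁ u₂ : ℝ) ≤ (G.dist v u₁ : ℝ) + (G.dist v u₂ : ℝ) := by
    have h' : G.dist u₁ u₂ ≤ G.dist v u₁ + G.dist v u₂ := by
      calc G.dist u₁ u₂ ≤ G.dist u₁ v + G.dist v u₂ := hG.dist_triangle
        _ = G.dist v u₁ + G.dist v u₂ := by rw [SimpleGraph.dist_comm]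
    exact_mod_cast h'
  have hdg : (G.dist u₁ u₂ : ℝ) ≤ 2 * (r * (r + 1)) := by linarith
  have := hstr (s, u₁) hu₁ (t, u₂) hu₂
  simp only at this
  have hmax : (T.dist s t : ℝ) ≤ max (T.dist s t : ℝ) (G.dist u₁ u₂ : ℝ) := le_max_left _ _
  have hmin : min (T.dist s t : ℝ) (G.dist u₁ u₂ : ℝ) ≤ (G.dist u₁ u₂ : ℝ) := min_le_right _ _
  have hr0 : (0 : ℝ) < r := by linarith
  have : (T.dist s t : ℝ) + 1 ≤ r * ((G.dist u₁ u₂ : ℝ) + 1) :=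
    le_trans (by linarith) (this.trans (by nlinarith))
  nlinarith
end
end

section
/- Fix a finite irreducible lazy Markov chain X on state space V, α,β∈(0,1], γ∈(0,1) and s∈V. Suppose ((C_i,D_i), 0 ≤ i ≤ k) is an (s,α,β,γ)-valid sequence in the bottleneck sequence game and D_k ≠ V. Then Crawler has at least one γ-valid move (C_{k+1},D_k) from position (C_k,D_k); moreover, from any such position (C_{k+1},D_k), Dasher has at least one (s,α,β)-valid move (C_{k+1},D_{k+1}). -/
open Finset

noncomputable section

namespace MarkovChain

variable {V : Type} [Fintype V] [DecidableEq V] (M : MarkovChain V)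

lemma Q_nonneg (A B : Finset V) : 0 ≤ M.Q A B :=
  Finset.sum_nonneg fun u _ => Finset.sum_nonneg fun v _ =>
    mul_nonneg (M.pi_pos u).le (M.P_nonneg u v)

lemma Q_eq_zero' {A B : Finset V} (h : ∀ u ∈ A, ∀ v ∈ B, M.P u v = 0) : M.Q A B = 0 :=
  Finset.sum_eq_zero fun u hu => Finset.sum_eq_zero fun v hv => by
    rw [h u hu v hv, mul_zero]

lemma Q_empty_left (B : Finset V) : M.Q ∅ B = 0 := by simp [MarkovChain.Q]

lemma Q_union_right {A B₁ B₂ : Finset V} (h : Disjoint B₁ B₂) :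
    M.Q A (B₁ ∪ B₂) = M.Q A B₁ + M.Q A B₂ := by
  unfold MarkovChain.Q
  rw [← Finset.sum_add_distrib]
  exact Finset.sum_congr rfl fun u _ => Finset.sum_union h

lemma hitProbLE_self (n : ℕ) (v : V) : M.hitProbLE n v v = 1 := by
  cases n <;> simp [MarkovChain.hitProbLE]

lemma near_self {α : ℝ} (hα : α ≤ 1) (v : V) : M.Near α v v := by
  unfold MarkovChain.Near
  rw [M.hitProbLE_self, mul_one]
  exact mul_le_of_le_one_left (M.pi_pos v).le hα

lemma walk_of_stepDist : ∀ (n : ℕ) (u v : V), 0 < M.stepDist n u v →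
    Nonempty (M.graph.Walk u v) := by
  intro n
  induction n with
  | zero =>
    intro u v h
    unfold MarkovChain.stepDist at h
    by_cases huv : u = v
    · subst huv; exact ⟨.nil⟩
    · simp [huv] at h
  | succ n ih =>
    intro u v h
    unfold MarkovChain.stepDist at h
    have : ∃ w, 0 < M.stepDist n u w * M.P w v := by
      by_contra hc
      push_neg at hc
      have : ∑ w, M.stepDist n u w * M.P w v ≤ 0 :=
        Finset.sum_nonpos fun w _ => hc w
      linarith
    obtain ⟨w, hw⟩ := this
    have h1 : 0 < M.stepDist n u w := by
      rcases lt_or_eq_of_le (le_of_not_gt fun h2 : M.stepDist n u w < 0 => by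
        nlinarith [M.P_nonneg w v]) with h' | h'
      · exact h'
      · exfalso; rw [← h'] at hw; simp at hw
    have h2 : 0 < M.P w v := by nlinarith [M.P_nonneg w v, M.stepDist n u w]
    obtain ⟨p⟩ := ih u w h1
    by_cases hwv : w = v
    · subst hwv; exact ⟨p⟩
    · exact ⟨p.concat ⟨hwv, Or.inl h2⟩⟩

lemma conn_empty : M.Conn (∅ : Finset V) := by
  intro u hu
  simp at hu

lemma conn_compl_empty (hirr : M.Irreducible) : M.Conn (∅ : Finset V)ᶜ := by
  intro u _ v _
  obtain ⟨n, hn⟩ := hirr u v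
  obtain ⟨p⟩ := M.walk_of_stepDist n u v hn
  exact ⟨p, fun x _ => by simp⟩

/-- Gluing: if `A` is connected and every vertex of `B` has a walk inside `A ∪ B`
to some vertex of `A`, then `A ∪ B` is connected. -/
lemma conn_glue {A B : Finset V} (hA : M.Conn A)
    (h : ∀ x ∈ B, ∃ c ∈ A, ∃ p : M.graph.Walk x c,
      ∀ y ∈ p.support, y ∈ A ∪ B) :
    M.Conn (A ∪ B) := by
  have key : ∀ x ∈ A ∪ B, ∃ c ∈ A, ∃ p : M.graph.Walk x c,
      ∀ y ∈ p.support, y ∈ A ∪ B := by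
    intro x hx
    by_cases hxA : x ∈ A
    · exact ⟨x, hxA, .nil, by
        intro y hy
        simp only [SimpleGraph.Walk.support_nil, List.mem_singleton] at hy
        subst hy
        exact Finset.mem_union_left _ hxA⟩
    · exact h x ((Finset.mem_union.mp hx).resolve_left hxA)
  intro u hu v hv
  simp only [Finset.coe_union, Set.mem_union, Finset.mem_coe] at hu hv
  obtain ⟨c1, hc1, p1, hp1⟩ := key u (Finset.mem_union.mpr hu)
  obtain ⟨c2, hc2, p2, hp2⟩ := key v (Finset.mem_union.mpr hv)
  obtain ⟨q, hq⟩ := hA c1 (by simpa using hc1) c2 (by simpa using hc2)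
  refine ⟨p1.append (q.append p2.reverse), ?_⟩
  intro x hx
  rw [SimpleGraph.Walk.mem_support_append_iff] at hx
  simp only [Finset.coe_union, Set.mem_union, Finset.mem_coe]
  rcases hx with hx | hx
  · exact Finset.mem_union.mp (hp1 x hx)
  · rw [SimpleGraph.Walk.mem_support_append_iff] at hx
    rcases hx with hx | hx
    · have := hq x hx
      simp only [Finset.mem_coe] at this
      exact Or.inl this
    · rw [SimpleGraph.Walk.support_reverse, List.mem_reverse] at hx
      exact Finset.mem_union.mp (hp2 x hx)

end MarkovChain

/-- **Lemma 6.1.** In the bottleneck sequence game for a finite irreducible lazy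
Markov chain, with `α, β ∈ (0,1]`, `γ ∈ (0,1)` and `s ∈ V`: if
`((C_i, D_i), 0 ≤ i ≤ k)` is an `(s,α,β,γ)`-valid sequence with `D_k ≠ V`, then
Crawler has at least one `γ`-valid move from `(C_k, D_k)`, and from any position
`(C', D_k)` reached by such a move, Dasher has at least one `(s,α,β)`-valid
move. -/
theorem game_moves_exist {V : Type} [Fintype V] [DecidableEq V] (X : MarkovChain V)
    (hirr : X.Irreducible) (hlazy : X.Lazy) (α β γ : ℝ)
    (hα : α ∈ Set.Ioc (0 : ℝ) 1) (hβ : β ∈ Set.Ioc (0 : ℝ) 1)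
    (hγ : γ ∈ Set.Ioo (0 : ℝ) 1) (s : V) (k : ℕ) (C D : ℕ → Finset V)
    (hvalid : X.ValidSeq s α β γ k C D) (hDk : D k ≠ Finset.univ) :
    (∃ C' : Finset V, X.CrawlerMove γ (C k) (D k) C') ∧
      ∀ C' : Finset V, X.CrawlerMove γ (C k) (D k) C' →
        ∃ D' : Finset V, X.DasherMove s α β C' (D k) D' := by
  classical
  obtain ⟨hC0, hD0, hmoves⟩ := hvalid
  -- invariants of the position (C k, D k)
  have H1 : X.Conn (C k) := by
    cases k with
    | zero => rw [hC0]; exact X.conn_empty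
    | succ k' => exact ((hmoves k' (Nat.lt_succ_self k')).1).2.2.1
  have H3 : X.Conn (D k)ᶜ := by
    cases k with
    | zero => rw [hD0]; exact X.conn_compl_empty hirr
    | succ k' => exact ((hmoves k' (Nat.lt_succ_self k')).2).2.1
  have H4 : X.Adjustment β (C k) (D k) := by
    cases k with
    | zero =>
      rw [hC0, hD0]
      intro S _ _
      simp only [Finset.empty_union]
      calc β * X.Q Sᶜ S ≤ 1 * X.Q Sᶜ S :=
            mul_le_mul_of_nonneg_right hβ.2 (X.Q_nonneg _ _)
        _ = X.Q Sᶜ S := one_mul _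
    | succ k' => exact ((hmoves k' (Nat.lt_succ_self k')).2).2.2.2.1
  have H5 : X.NearSet α (X.innerBoundary (D k)) (C k) := by
    cases k with
    | zero =>
      rw [hD0]
      intro v hv
      exact absurd hv.1 (by simp)
    | succ k' => exact ((hmoves k' (Nat.lt_succ_self k')).2).2.2.1
  have H6 : s ∉ D k := by
    cases k with
    | zero => simp [hD0]
    | succ k' =>
      intro hs
      exact hDk (((hmoves k' (Nat.lt_succ_self k')).2).2.2.2.2 hs).2
  constructor
  · -- Crawler's move
    set F : Finset V := (D k)ᶜ.filter (fun u => ∃ v ∈ C k, 0 < X.P u v) with hF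
    refine ⟨C k ∪ F, Finset.subset_union_left, ?_, ?_, ?_⟩
    · intro u hu
      rw [Finset.mem_sdiff] at hu
      rcases Finset.mem_union.mp hu.1 with h | h
      · exact absurd h hu.2
      · exact (Finset.mem_filter.mp h).1
    · -- connectivity
      apply X.conn_glue H1
      intro x hx
      obtain ⟨hxD, v, hvC, hvP⟩ := Finset.mem_filter.mp hx
      by_cases hxC : x ∈ C k
      · exact ⟨x, hxC, .nil, by
          intro y hy
          simp only [SimpleGraph.Walk.support_nil, List.mem_singleton] at hy
          subst hy
          exact Finset.mem_union_left _ hxC⟩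
      · have hadj : X.graph.Adj x v := ⟨fun h => hxC (h ▸ hvC), Or.inl hvP⟩
        refine ⟨v, hvC, .cons hadj .nil, ?_⟩
        intro y hy
        simp only [SimpleGraph.Walk.support_cons, SimpleGraph.Walk.support_nil,
          List.mem_cons, List.mem_singleton] at hy
        rcases hy with rfl | hy
        · exact Finset.mem_union_right _ hx
        · rcases hy with rfl | hy
          · exact Finset.mem_union_left _ hvC
          · simp at hy
    · -- Q condition
      have hzero : X.Q (D k ∪ (C k ∪ F))ᶜ (C k) = 0 := by
        apply X.Q_eq_zero'
        intro u hu v hv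
        by_contra hne
        have hpos : 0 < X.P u v := lt_of_le_of_ne (X.P_nonneg u v) (Ne.symm hne)
        rw [Finset.mem_compl] at hu
        have huD : u ∉ D k := fun h => hu (Finset.mem_union_left _ h)
        have : u ∈ F := Finset.mem_filter.mpr ⟨Finset.mem_compl.mpr huD, v, hv, hpos⟩
        exact hu (Finset.mem_union_right _ (Finset.mem_union_right _ this))
      rw [hzero]
      exact mul_nonneg hγ.1.le (X.Q_nonneg _ _)
  · -- Dasher's move
    intro C' hC'
    obtain ⟨hCC', hC'D, hConnC', _⟩ := hC'
    have hC'DC : ∀ v ∈ C', v ∈ D k → v ∈ C k := by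
      intro v hv hvD
      by_contra hvC
      exact (Finset.mem_compl.mp (hC'D (Finset.mem_sdiff.mpr ⟨hv, hvC⟩))) hvD
    by_cases hnear : ∃ u ∈ C', X.Near α s u
    · -- Dasher finishes the game
      refine ⟨Finset.univ, Finset.subset_univ _, ?_, ?_, ?_, fun _ => ⟨hnear, rfl⟩⟩
      · intro u hu
        simp at hu
      · intro v hv
        obtain ⟨u, hu, _⟩ := hv.2
        exact absurd (Finset.mem_univ u) hu
      · intro S hS _
        rw [Finset.compl_univ, Finset.subset_empty] at hS
        subst hS
        have h1 : (Finset.univ ∪ (∅ : Finset V))ᶜ = (∅ : Finset V) := by simp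
        rw [h1, X.Q_empty_left, X.Q_empty_left, mul_zero]
    · -- Dasher walls off the component of s
      push_neg at hnear
      have hsC' : s ∉ C' := fun h => hnear s h (X.near_self hα.2 s)
      have hsDC' : s ∉ D k ∪ C' := by
        intro h
        rcases Finset.mem_union.mp h with h | h
        · exact H6 h
        · exact hsC' h
      set K : Finset V := Finset.univ.filter (fun v => v ∉ D k ∪ C' ∧
        ∃ p : X.graph.Walk s v, ∀ x ∈ p.support, x ∉ D k ∪ C') with hK
      have hsK : s ∈ K := by
        refine Finset.mem_filter.mpr ⟨Finset.mem_univ _, hsDC', .nil, ?_⟩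
        intro x hx
        simp only [SimpleGraph.Walk.support_nil, List.mem_singleton] at hx
        subst hx
        exact hsDC'
      have hKdisj : ∀ v ∈ K, v ∉ D k ∪ C' := fun v hv => (Finset.mem_filter.mp hv).2.1
      have hKmax : ∀ u ∈ K, ∀ v, X.graph.Adj u v → v ∉ D k ∪ C' → v ∈ K := by
        intro u hu v hadj hv
        obtain ⟨_, _, p, hp⟩ := Finset.mem_filter.mp hu
        refine Finset.mem_filter.mpr ⟨Finset.mem_univ _, hv, p.concat hadj, ?_⟩
        intro x hx
        rw [SimpleGraph.Walk.support_concat, List.mem_append,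
          List.mem_singleton] at hx
        rcases hx with hx | rfl
        · exact hp x hx
        · exact hv
      have hKsupp : ∀ (v : V) (p : X.graph.Walk s v),
          (∀ x ∈ p.support, x ∉ D k ∪ C') → ∀ x ∈ p.support, x ∈ K := by
        intro v p hp x hx
        refine Finset.mem_filter.mpr ⟨Finset.mem_univ _, hp x hx, p.takeUntil x hx, ?_⟩
        intro y hy
        exact hp y (SimpleGraph.Walk.support_takeUntil_subset p hx hy)
      have hKconn : X.Conn K := by
        intro u hu v hv
        simp only [Finset.mem_coe] at hu hv
        obtain ⟨_, _, pu, hpu⟩ := Finset.mem_filter.mp hu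
        obtain ⟨_, _, pv, hpv⟩ := Finset.mem_filter.mp hv
        refine ⟨pu.reverse.append pv, ?_⟩
        intro x hx
        rw [SimpleGraph.Walk.mem_support_append_iff] at hx
        simp only [Finset.mem_coe]
        rcases hx with hx | hx
        · rw [SimpleGraph.Walk.support_reverse, List.mem_reverse] at hx
          exact hKsupp u pu hpu x hx
        · exact hKsupp v pv hpv x hx
      set T : Finset V := Kᶜ \ (D k ∪ C') with hT
      have hDCK : D k ∪ C' ⊆ Kᶜ := fun v hv =>
        Finset.mem_compl.mpr (fun h => hKdisj v h hv)
      have hKc : Kᶜ = (D k ∪ C') ∪ T := by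
        rw [hT, Finset.union_sdiff_of_subset hDCK]
      have hTmem : ∀ v ∈ T, v ∉ K ∧ v ∉ D k ∪ C' := by
        intro v hv
        obtain ⟨h1, h2⟩ := Finset.mem_sdiff.mp hv
        exact ⟨Finset.mem_compl.mp h1, h2⟩
      -- walk-exit lemma: from T we can reach C' within T
      have hexit : ∀ (a b : V) (q : X.graph.Walk a b),
          (∀ x ∈ q.support, x ∉ D k) → a ∈ T → b ∈ K →
          ∃ c ∈ C', ∃ p : X.graph.Walk a c, ∀ y ∈ p.support, y ∈ T ∪ C' := by
        intro a b q
        induction q with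
        | nil =>
          intro _ ha hb
          exact absurd hb (hTmem _ ha).1
        | @cons a a' b hadj q ih =>
          intro hsup ha hb
          by_cases h1 : a' ∈ C'
          · refine ⟨a', h1, .cons hadj .nil, ?_⟩
            intro y hy
            simp only [SimpleGraph.Walk.support_cons, SimpleGraph.Walk.support_nil,
              List.mem_cons, List.mem_singleton] at hy
            rcases hy with rfl | hy
            · exact Finset.mem_union_left _ ha
            · rcases hy with rfl | hy
              · exact Finset.mem_union_right _ h1
              · simp at hy
          · by_cases h2 : a' ∈ K
            · exact absurd (hKmax a' h2 a hadj.symm (hTmem a ha).2) (hTmem a ha).1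
            · have ha'D : a' ∉ D k := hsup a' (by
                simp [SimpleGraph.Walk.support_cons])
              have ha' : a' ∈ T := Finset.mem_sdiff.mpr ⟨Finset.mem_compl.mpr h2,
                fun h => (Finset.mem_union.mp h).elim ha'D h1⟩
              obtain ⟨c, hc, p, hp⟩ := ih (fun x hx => hsup x (by
                simp only [SimpleGraph.Walk.support_cons, List.mem_cons]; exact Or.inr hx))
                ha' hb
              refine ⟨c, hc, .cons hadj p, ?_⟩
              intro y hy
              simp only [SimpleGraph.Walk.support_cons, List.mem_cons] at hy
              rcases hy with rfl | hy
              · exact Finset.mem_union_left _ ha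
              · exact hp y hy
      refine ⟨Kᶜ, hDCK, ?_, ?_, ?_, ?_⟩
      · -- Conn Kᶜᶜ
        rw [compl_compl]
        exact hKconn
      · -- NearSet
        intro v hv
        obtain ⟨hvKc, u, huKc, hPuv⟩ := hv
        have huK : u ∈ K := by
          by_contra h
          exact huKc (Finset.mem_compl.mpr h)
        have hne : u ≠ v := by
          intro h
          subst h
          exact (Finset.mem_compl.mp hvKc) huK
        have hadj : X.graph.Adj u v := ⟨hne, Or.inl hPuv⟩
        have hvDC : v ∈ D k ∪ C' := by
          by_contra h
          exact (Finset.mem_compl.mp hvKc) (hKmax u huK v hadj h)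
        by_cases hvC' : v ∈ C'
        · exact ⟨v, hvC', X.near_self hα.2 v⟩
        · have hvD : v ∈ D k := (Finset.mem_union.mp hvDC).resolve_right hvC'
          have huD : u ∉ D k := fun h => hKdisj u huK (Finset.mem_union_left _ h)
          obtain ⟨u', hu', hnear'⟩ := H5 v ⟨hvD, u, huD, hPuv⟩
          exact ⟨u', hCC' hu', hnear'⟩
      · -- Adjustment
        intro S hS hconnS
        rw [compl_compl] at hS
        set S₀ : Finset V := (C' \ D k) ∪ S ∪ T with hS₀
        have hS₀D : S₀ ⊆ (D k)ᶜ := by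
          intro v hv
          rw [Finset.mem_compl]
          rcases Finset.mem_union.mp hv with hv | hv
          · rcases Finset.mem_union.mp hv with hv | hv
            · exact (Finset.mem_sdiff.mp hv).2
            · exact fun h => hKdisj v (hS hv) (Finset.mem_union_left _ h)
          · exact fun h => (hTmem v hv).2 (Finset.mem_union_left _ h)
        have hCS₀ : C k ∪ S₀ = (C' ∪ S) ∪ T := by
          ext v
          have h1 : v ∈ C k → v ∈ C' := fun h => hCC' h
          have h2 : v ∈ C' → v ∈ D k → v ∈ C k := hC'DC v
          simp only [hS₀, Finset.mem_union, Finset.mem_sdiff]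
          tauto
        have hDS₀ : D k ∪ S₀ = Kᶜ ∪ S := by
          apply Finset.Subset.antisymm
          · intro v hv
            rcases Finset.mem_union.mp hv with h | h
            · exact Finset.mem_union_left _ (hDCK (Finset.mem_union_left _ h))
            · rcases Finset.mem_union.mp h with h | h
              · rcases Finset.mem_union.mp h with h | h
                · exact Finset.mem_union_left _
                    (hDCK (Finset.mem_union_right _ (Finset.mem_sdiff.mp h).1))
                · exact Finset.mem_union_right _ h
              · exact Finset.mem_union_left _
                  (Finset.mem_compl.mpr (hTmem v h).1)
          · intro v hv
            rcases Finset.mem_union.mp hv with h | h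
            · rw [hKc] at h
              rcases Finset.mem_union.mp h with h | h
              · rcases Finset.mem_union.mp h with h | h
                · exact Finset.mem_union_left _ h
                · by_cases hvD : v ∈ D k
                  · exact Finset.mem_union_left _ hvD
                  · exact Finset.mem_union_right _ (Finset.mem_union_left _
                      (Finset.mem_union_left _ (Finset.mem_sdiff.mpr ⟨h, hvD⟩)))
              · exact Finset.mem_union_right _ (Finset.mem_union_right _ h)
            · exact Finset.mem_union_right _
                (Finset.mem_union_left _ (Finset.mem_union_right _ h))
        have hconn₀ : X.Conn (C k ∪ S₀) := by
          rw [hCS₀]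
          apply X.conn_glue hconnS
          intro t ht
          have htD : t ∈ (D k)ᶜ := Finset.mem_compl.mpr
            (fun h => (hTmem t ht).2 (Finset.mem_union_left _ h))
          have hsD : s ∈ (D k)ᶜ := Finset.mem_compl.mpr H6
          obtain ⟨q, hq⟩ := H3 t (Finset.mem_coe.mpr htD) s (Finset.mem_coe.mpr hsD)
          obtain ⟨c, hc, p, hp⟩ := hexit t s q
            (fun x hx => Finset.mem_compl.mp (Finset.mem_coe.mp (hq x hx))) ht hsK
          refine ⟨c, Finset.mem_union_left _ hc, p, ?_⟩
          intro y hy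
          rcases Finset.mem_union.mp (hp y hy) with h | h
          · exact Finset.mem_union_right _ h
          · exact Finset.mem_union_left _ (Finset.mem_union_left _ h)
        have hmain := H4 S₀ hS₀D hconn₀
        rw [hDS₀, hCS₀] at hmain
        have hdisjT : Disjoint (C' ∪ S) T := by
          rw [Finset.disjoint_left]
          intro v hv hvT
          rcases Finset.mem_union.mp hv with h | h
          · exact (hTmem v hvT).2 (Finset.mem_union_right _ h)
          · exact (hTmem v hvT).1 (hS h)
        rw [X.Q_union_right hdisjT] at hmain
        have hQT : X.Q (Kᶜ ∪ S)ᶜ T = 0 := by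
          apply X.Q_eq_zero'
          intro u hu v hv
          by_contra hne
          have hpos : 0 < X.P u v := lt_of_le_of_ne (X.P_nonneg u v) (Ne.symm hne)
          rw [Finset.mem_compl, Finset.mem_union, not_or, Finset.mem_compl,
            not_not] at hu
          have hneq : u ≠ v := fun h => (hTmem v hv).1 (h ▸ hu.1)
          exact (hTmem v hv).1 (hKmax u hu.1 v ⟨hneq, Or.inl hpos⟩ (hTmem v hv).2)
        rw [hQT, add_zero] at hmain
        exact hmain
      · -- s ∉ Kᶜ
        intro hsKc
        exact absurd hsK (Finset.mem_compl.mp hsKc)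
end
end

section
/- Let X be an irreducible lazy Markov chain on a finite state space V with stationary distribution π, let s∈V, let τ be a stopping rule from s to π, and let y_v be the scaled exit frequencies of τ. For any u,v∈V and m∈ℕ, if v is (1/m)-near to u, then y_v ≤ m(m+1)y_u + m²(m+1)/2. -/
open Finset

noncomputable section

section AuxNear

variable {V : Type} [Fintype V] [DecidableEq V]

lemma aux_hitProbLE_nonneg (X : MarkovChain V) (u : V) :
    ∀ (n : ℕ) (w : V), 0 ≤ X.hitProbLE n w u := by
  intro n
  induction n with
  | zero =>
      intro w
      simp only [MarkovChain.hitProbLE]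
      split_ifs <;> norm_num
  | succ n ih =>
      intro w
      simp only [MarkovChain.hitProbLE]
      split_ifs with h
      · norm_num
      · exact Finset.sum_nonneg fun z _ => mul_nonneg (X.P_nonneg w z) (ih z)

lemma aux_hitProbLE_le_one (X : MarkovChain V) (u : V) :
    ∀ (n : ℕ) (w : V), X.hitProbLE n w u ≤ 1 := by
  intro n
  induction n with
  | zero =>
      intro w
      simp only [MarkovChain.hitProbLE]
      split_ifs <;> norm_num
  | succ n ih =>
      intro w
      simp only [MarkovChain.hitProbLE]
      split_ifs with h
      · norm_num
      · calc ∑ z, X.P w z * X.hitProbLE n z u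
            ≤ ∑ z, X.P w z := by
              refine Finset.sum_le_sum fun z _ => ?_
              exact mul_le_of_le_one_right (X.P_nonneg w z) (ih z)
          _ = 1 := X.P_rowsum w

lemma aux_hitProbLE_self (X : MarkovChain V) (u : V) (n : ℕ) :
    X.hitProbLE n u u = 1 := by
  cases n <;> simp [MarkovChain.hitProbLE]

lemma aux_pi_hit (X : MarkovChain V) (u : V) :
    ∀ n : ℕ, ∑ w, X.pi w * X.hitProbLE n w u ≤ ((n : ℝ) + 1) * X.pi u := by
  intro n
  induction n with
  | zero =>
      simp only [MarkovChain.hitProbLE, mul_ite, mul_one, mul_zero,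
        Finset.sum_ite_eq', Finset.mem_univ, if_true, Nat.cast_zero]
      linarith [X.pi_pos u]
  | succ n ih =>
      have step : ∑ w, X.pi w * X.hitProbLE (n + 1) w u
          ≤ X.pi u + ∑ w, X.pi w * ∑ z, X.P w z * X.hitProbLE n z u := by
        have hterm : ∀ w : V, X.pi w * X.hitProbLE (n + 1) w u
            ≤ (if w = u then X.pi w else 0) +
              X.pi w * ∑ z, X.P w z * X.hitProbLE n z u := by
          intro w
          simp only [MarkovChain.hitProbLE]
          split_ifs with h
          · have h1 : 0 ≤ ∑ z, X.P w z * X.hitProbLE n z u :=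
              Finset.sum_nonneg fun z _ =>
                mul_nonneg (X.P_nonneg w z) (aux_hitProbLE_nonneg X u n z)
            nlinarith [(X.pi_pos w).le]
          · simp
        calc ∑ w, X.pi w * X.hitProbLE (n + 1) w u
            ≤ ∑ w, ((if w = u then X.pi w else 0) +
                X.pi w * ∑ z, X.P w z * X.hitProbLE n z u) :=
              Finset.sum_le_sum fun w _ => hterm w
          _ = X.pi u + ∑ w, X.pi w * ∑ z, X.P w z * X.hitProbLE n z u := by
              rw [Finset.sum_add_distrib, Finset.sum_ite_eq' Finset.univ u X.pi]
              simp
      have swap : ∑ w, X.pi w * ∑ z, X.P w z * X.hitProbLE n z u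
          = ∑ z, X.pi z * X.hitProbLE n z u := by
        calc ∑ w, X.pi w * ∑ z, X.P w z * X.hitProbLE n z u
            = ∑ w, ∑ z, (X.pi w * X.P w z) * X.hitProbLE n z u := by
              simp_rw [Finset.mul_sum, mul_assoc]
          _ = ∑ z, (∑ w, X.pi w * X.P w z) * X.hitProbLE n z u := by
              rw [Finset.sum_comm]
              simp_rw [Finset.sum_mul]
          _ = ∑ z, X.pi z * X.hitProbLE n z u := by
              simp_rw [X.pi_stat]
      rw [swap] at step
      push_cast
      linarith [step, ih]

lemma aux_exit_identity (X : MarkovChain V) (s : V) (x : V → ℝ)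
    (hbal : ∀ v, (if v = s then (1 : ℝ) else 0) + ∑ u, x u * X.P u v
      = X.pi v + x v) (f : V → ℝ) :
    ∑ w, x w * (f w - ∑ z, X.P w z * f z) = f s - ∑ w, X.pi w * f w := by
  have key : ∀ z, ∑ w, x w * X.P w z
      = X.pi z + x z - (if z = s then (1 : ℝ) else 0) := by
    intro z; linarith [hbal z]
  have h1 : ∑ w, x w * ∑ z, X.P w z * f z
      = ∑ z, (∑ w, x w * X.P w z) * f z := by
    simp_rw [Finset.mul_sum, ← mul_assoc]
    rw [Finset.sum_comm]
    simp_rw [Finset.sum_mul]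
  have h2 : ∑ z, (∑ w, x w * X.P w z) * f z
      = ∑ z, X.pi z * f z + ∑ z, x z * f z - f s := by
    simp_rw [key, sub_mul, add_mul]
    rw [Finset.sum_sub_distrib, Finset.sum_add_distrib]
    simp [ite_mul, Finset.sum_ite_eq' Finset.univ s f]
  simp_rw [mul_sub]
  rw [Finset.sum_sub_distrib, h1, h2]
  ring

lemma aux_gauss (m : ℕ) :
    ∑ n ∈ Finset.range m, ((n : ℝ) + 1) = (m : ℝ) * ((m : ℝ) + 1) / 2 := by
  induction m with
  | zero => simp
  | succ m ih =>
      rw [Finset.sum_range_succ, ih]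
      push_cast
      ring

end AuxNear

/-- **Lemma 6.2.** Let `x` be the exit frequencies of a stopping rule from `s` to
`π`, with scaled exit frequencies `y v = x v / π v`. If `v` is `(1/m)`-near to `u`
for some `m ∈ ℕ`, then `y_v ≤ m(m+1) y_u + m²(m+1)/2`. -/
theorem near_exit_frequency_bound {V : Type} [Fintype V] [DecidableEq V]
    (X : MarkovChain V) (hirr : X.Irreducible) (hlazy : X.Lazy)
    (s : V) (x : V → ℝ) (hx : X.IsExitMeasure s x)
    (u v : V) (m : ℕ) (hm : 0 < m) (hnear : X.Near (1 / (m : ℝ)) v u) :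
    x v / X.pi v ≤ (m : ℝ) * ((m : ℝ) + 1) * (x u / X.pi u) +
      (m : ℝ) ^ 2 * ((m : ℝ) + 1) / 2 := by
  obtain ⟨hxnn, hbal⟩ := hx
  have hπu := X.pi_pos u
  have hπv := X.pi_pos v
  have hmR : (0 : ℝ) < (m : ℝ) := by exact_mod_cast hm
  have hyu : 0 ≤ x u / X.pi u := div_nonneg (hxnn u) hπu.le
  -- unpack the nearness hypothesis
  have hfloor : ⌊1 / (1 / (m : ℝ))⌋₊ = m := by
    rw [one_div_one_div]; exact Nat.floor_natCast m
  have hnear' : (1 / (m : ℝ)) * X.pi u ≤ X.pi v * X.hitProbLE m v u := by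
    have h := hnear
    unfold MarkovChain.Near at h
    rwa [hfloor] at h
  by_cases hvu : v = u
  · subst hvu
    have hm1 : (1 : ℝ) ≤ (m : ℝ) := by exact_mod_cast hm
    have h1 : (1 : ℝ) ≤ (m : ℝ) * ((m : ℝ) + 1) := by nlinarith
    have h2 : (0 : ℝ) ≤ (m : ℝ) ^ 2 * ((m : ℝ) + 1) / 2 := by positivity
    nlinarith
  -- the test function F
  set F : V → ℝ := fun w => ∑ n ∈ Finset.range m, X.hitProbLE n w u with hF
  have hid := aux_exit_identity X s x hbal F
  -- P applied to F
  have hPF : ∀ w, ∑ z, X.P w z * F z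
      = ∑ n ∈ Finset.range m, ∑ z, X.P w z * X.hitProbLE n z u := by
    intro w
    simp_rw [hF, Finset.mul_sum]
    rw [Finset.sum_comm]
  -- value at w ≠ u
  have hne : ∀ w, w ≠ u → F w - ∑ z, X.P w z * F z = -(X.hitProbLE m w u) := by
    intro w hw
    rw [hPF w, hF]
    have hrec : ∀ n : ℕ, ∑ z, X.P w z * X.hitProbLE n z u
        = X.hitProbLE (n + 1) w u := by
      intro n
      simp [MarkovChain.hitProbLE, hw]
    simp_rw [hrec]
    rw [← Finset.sum_sub_distrib, Finset.sum_range_sub' (fun n => X.hitProbLE n w u)]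
    simp [MarkovChain.hitProbLE, hw]
  -- value at u
  have hFu : F u = (m : ℝ) := by
    simp [hF, aux_hitProbLE_self]
  have hPFu : (m : ℝ) / 2 ≤ ∑ z, X.P u z * F z := by
    rw [hPF u]
    have hterm : ∀ n ∈ Finset.range m,
        (1 : ℝ) / 2 ≤ ∑ z, X.P u z * X.hitProbLE n z u := by
      intro n _
      have hsingle : X.P u u * X.hitProbLE n u u
          ≤ ∑ z, X.P u z * X.hitProbLE n z u := by
        refine Finset.single_le_sum (f := fun z => X.P u z * X.hitProbLE n z u)
          (fun z _ => mul_nonneg (X.P_nonneg u z) (aux_hitProbLE_nonneg X u n z))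
          (Finset.mem_univ u)
      rwa [aux_hitProbLE_self, hlazy u, mul_one] at hsingle
    calc (m : ℝ) / 2 = ∑ _n ∈ Finset.range m, (1 : ℝ) / 2 := by
          simp [Finset.sum_const]; ring
      _ ≤ _ := Finset.sum_le_sum hterm
  have hFuPFu : F u - ∑ z, X.P u z * F z ≤ (m : ℝ) / 2 := by
    rw [hFu]; linarith
  -- split the identity sum at u
  have hsplit : ∑ w, x w * (F w - ∑ z, X.P w z * F z)
      = x u * (F u - ∑ z, X.P u z * F z)
        - ∑ w ∈ Finset.univ.erase u, x w * X.hitProbLE m w u := by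
    rw [← Finset.add_sum_erase _ _ (Finset.mem_univ u)]
    congr 1
    rw [← Finset.sum_neg_distrib]
    refine Finset.sum_congr rfl fun w hw => ?_
    rw [hne w (Finset.ne_of_mem_erase hw)]
    ring
  -- bounds on the right-hand side of the identity
  have hFs : 0 ≤ F s :=
    Finset.sum_nonneg fun n _ => aux_hitProbLE_nonneg X u n s
  have hπF : ∑ w, X.pi w * F w ≤ X.pi u * ((m : ℝ) * ((m : ℝ) + 1) / 2) := by
    have hswap : ∑ w, X.pi w * F w
        = ∑ n ∈ Finset.range m, ∑ w, X.pi w * X.hitProbLE n w u := by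
      simp_rw [hF, Finset.mul_sum]
      rw [Finset.sum_comm]
    rw [hswap]
    calc ∑ n ∈ Finset.range m, ∑ w, X.pi w * X.hitProbLE n w u
        ≤ ∑ n ∈ Finset.range m, ((n : ℝ) + 1) * X.pi u :=
          Finset.sum_le_sum fun n _ => aux_pi_hit X u n
      _ = X.pi u * ((m : ℝ) * ((m : ℝ) + 1) / 2) := by
          rw [← Finset.sum_mul, aux_gauss]; ring
  -- the key inequality
  have hkey : x v * X.hitProbLE m v u
      ≤ (m : ℝ) / 2 * x u + X.pi u * ((m : ℝ) * ((m : ℝ) + 1) / 2) := by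
    have hmem : v ∈ Finset.univ.erase u :=
      Finset.mem_erase.2 ⟨hvu, Finset.mem_univ v⟩
    have hsingle : x v * X.hitProbLE m v u
        ≤ ∑ w ∈ Finset.univ.erase u, x w * X.hitProbLE m w u := by
      exact Finset.single_le_sum (f := fun w => x w * X.hitProbLE m w u)
        (fun w _ => mul_nonneg (hxnn w) (aux_hitProbLE_nonneg X u m w)) hmem
    have hx_u : x u * (F u - ∑ z, X.P u z * F z) ≤ x u * ((m : ℝ) / 2) :=
      mul_le_mul_of_nonneg_left hFuPFu (hxnn u)
    rw [hsplit] at hid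
    have : ∑ w ∈ Finset.univ.erase u, x w * X.hitProbLE m w u
        = x u * (F u - ∑ z, X.P u z * F z) - F s + ∑ w, X.pi w * F w := by
      linarith
    nlinarith [hsingle, hx_u, hπF, hFs]
  -- finish with arithmetic
  have hHv : (0 : ℝ) < X.pi v * X.hitProbLE m v u := by
    calc (0 : ℝ) < 1 / (m : ℝ) * X.pi u := by positivity
      _ ≤ _ := hnear'
  have hyv : x v / X.pi v * (1 / (m : ℝ) * X.pi u)
      ≤ (m : ℝ) / 2 * x u + X.pi u * ((m : ℝ) * ((m : ℝ) + 1) / 2) := by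
    calc x v / X.pi v * (1 / (m : ℝ) * X.pi u)
        ≤ x v / X.pi v * (X.pi v * X.hitProbLE m v u) :=
          mul_le_mul_of_nonneg_left hnear' (div_nonneg (hxnn v) hπv.le)
      _ = x v * X.hitProbLE m v u := by
          field_simp
      _ ≤ _ := hkey
  have hxu' : x u = x u / X.pi u * X.pi u := by field_simp
  rw [hxu'] at hyv
  have hgoal : x v / X.pi v * (1 / (m : ℝ) * X.pi u)
      ≤ ((m : ℝ) * ((m : ℝ) + 1) * (x u / X.pi u) +
          (m : ℝ) ^ 2 * ((m : ℝ) + 1) / 2) * (1 / (m : ℝ) * X.pi u) := by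
    calc x v / X.pi v * (1 / (m : ℝ) * X.pi u)
        ≤ (m : ℝ) / 2 * (x u / X.pi u * X.pi u) +
            X.pi u * ((m : ℝ) * ((m : ℝ) + 1) / 2) := hyv
      _ ≤ _ := by
          have h1 : 0 ≤ x u / X.pi u * X.pi u := by positivity
          field_simp
          have h2 : 0 ≤ (m : ℝ) * ((m : ℝ) + 2) * (x u * X.pi u) :=
            mul_nonneg (mul_nonneg hmR.le (by linarith))
              (mul_nonneg (hxnn u) hπu.le)
          nlinarith [h2, mul_nonneg hmR.le (hxnn u), hxnn u]
  have hpos : (0 : ℝ) < 1 / (m : ℝ) * X.pi u := by positivity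
  exact le_of_mul_le_mul_right (by simpa [mul_comm] using hgoal) hpos
end
end
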